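/- arXiv:2503.21216 — 8 statements merged into one kernel-verified Lean document; each statement's English description precedes it below -/
import Mathlib

section
/- Let C be an idempotent complete additive category. An indecomposable object A of C has the finite exchange property if and only if End(A) is a local ring. -/
open CategoryTheory CategoryTheory.Limits

/-- Finite exchange property for an object of an additive category. -/
def FinExchange {C : Type*} [Category C] [Preadditive C] [HasFiniteBiproducts C]
    [HasBinaryBiproducts C] (A : C) : Prop :=
  ∀ (n : ℕ) (B : Fin n → C) (u : A ⟶ ⨁ B), IsSplitMono u →
    ∃ (Cc Dd : Fin n → C) (v : ∀ i, Cc i ⟶ B i) (w : ∀ i, Dd i ⟶ B i),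
      (∀ i, IsIso (biprod.desc (v i) (w i))) ∧
      IsIso (biprod.desc u (biproduct.desc (fun i => v i ≫ biproduct.ι B i)))

/-- An object is indecomposable if it is nonzero and in any direct sum decomposition one of
the summands is zero. -/
def IndecomposableObj {C : Type*} [Category C] [Preadditive C] [HasBinaryBiproducts C]
    (A : C) : Prop :=
  ¬ IsZero A ∧ ∀ (B D : C), Nonempty (A ≅ B ⊞ D) → IsZero B ∨ IsZero D

/-- In a local (possibly noncommutative) ring, a sum being a unit forces a summand to be
a unit. -/
lemma isUnit_of_isUnit_add' {R : Type*} [Ring R] [IsLocalRing R] {x y : R}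
    (h : IsUnit (x + y)) : IsUnit x ∨ IsUnit y := by
  obtain ⟨u, hu⟩ := h
  have h1 : (↑u⁻¹ : R) * x + (↑u⁻¹ : R) * y = 1 := by
    rw [← mul_add, ← hu, Units.inv_mul]
  rcases IsLocalRing.isUnit_or_isUnit_of_add_one h1 with h2 | h2
  · left
    have := u.isUnit.mul h2
    rwa [← mul_assoc, Units.mul_inv, one_mul] at this
  · right
    have := u.isUnit.mul h2
    rwa [← mul_assoc, Units.mul_inv, one_mul] at this

lemma exists_isUnit_of_sum_eq_one {R : Type*} [Ring R] [IsLocalRing R] {ι : Type*}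
    (s : Finset ι) (f : ι → R) (h : IsUnit (∑ i ∈ s, f i)) : ∃ j ∈ s, IsUnit (f j) := by
  classical
  induction s using Finset.cons_induction with
  | empty => simp at h
  | cons a s ha ih =>
    rw [Finset.sum_cons] at h
    rcases isUnit_of_isUnit_add' h with h1 | h1
    · exact ⟨a, Finset.mem_cons_self a s, h1⟩
    · obtain ⟨j, hj, hju⟩ := ih h1
      exact ⟨j, Finset.mem_cons.2 (Or.inr hj), hju⟩

/-- In an idempotent complete additive category, an indecomposable object has no nontrivial
idempotent endomorphisms. -/
lemma idem_trivial {C : Type*} [Category C] [Preadditive C] [HasBinaryBiproducts C]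
    [IsIdempotentComplete C] {A : C} (hA : IndecomposableObj A) (e : A ⟶ A)
    (he : e ≫ e = e) : e = 0 ∨ e = 𝟙 A := by
  obtain ⟨Y₁, i₁, p₁, hip₁, hpi₁⟩ := IsIdempotentComplete.idempotents_split A e he
  obtain ⟨Y₂, i₂, p₂, hip₂, hpi₂⟩ := IsIdempotentComplete.idempotents_split A (𝟙 A - e)
    (by simp [Preadditive.sub_comp, Preadditive.comp_sub, he])
  haveI : IsSplitMono i₁ := IsSplitMono.mk' ⟨p₁, hip₁⟩
  haveI : IsSplitMono i₂ := IsSplitMono.mk' ⟨p₂, hip₂⟩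
  have hi₁e : i₁ ≫ e = i₁ := by rw [← hpi₁, ← Category.assoc, hip₁, Category.id_comp]
  have hi₂e : i₂ ≫ e = 0 := by
    have h2 : i₂ ≫ (𝟙 A - e) = i₂ := by
      rw [← hpi₂, ← Category.assoc, hip₂, Category.id_comp]
    rw [Preadditive.comp_sub, Category.comp_id] at h2
    exact sub_eq_self.mp h2
  have hi₁p₂ : i₁ ≫ p₂ = 0 := by
    rw [← cancel_mono i₂, Category.assoc, hpi₂, Preadditive.comp_sub, Category.comp_id,
      hi₁e, sub_self, zero_comp]
  have hi₂p₁ : i₂ ≫ p₁ = 0 := by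
    rw [← cancel_mono i₁, Category.assoc, hpi₁, hi₂e, zero_comp]
  have hiso : A ≅ Y₁ ⊞ Y₂ := by
    refine ⟨biprod.lift p₁ p₂, biprod.desc i₁ i₂, ?_, ?_⟩
    · rw [biprod.lift_desc, hpi₁, hpi₂]; abel
    · apply biprod.hom_ext' <;> apply biprod.hom_ext <;>
        simp [hip₁, hip₂, hi₁p₂, hi₂p₁]
  rcases hA.2 Y₁ Y₂ ⟨hiso⟩ with h | h
  · left
    rw [← hpi₁, h.eq_zero_of_src i₁, comp_zero]
  · right
    have h0 : 𝟙 A - e = 0 := by rw [← hpi₂, h.eq_zero_of_src i₂, comp_zero]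
    have h1 : e - 𝟙 A = 0 := by rw [← neg_sub (𝟙 A) e, h0, neg_zero]
    exact sub_eq_zero.mp h1

section Main

variable {C : Type*} [Category C] [Preadditive C] [HasFiniteBiproducts C]
    [HasBinaryBiproducts C] {A : C}

lemma key_unit (hne : 𝟙 A ≠ 0)
    (hidem : ∀ e : A ⟶ A, e ≫ e = e → e = 0 ∨ e = 𝟙 A)
    (hex : FinExchange A) (f : A ⟶ A) :
    IsUnit (M := End A) f ∨ IsUnit (M := End A) (𝟙 A - f) := by
  classical
  set B : Fin 2 → C := fun _ => A with hB
  set g : ∀ i, A ⟶ B i := ![f, 𝟙 A - f] with hg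
  have hg0 : g 0 = f := by simp [hg]
  have hg1 : g 1 = 𝟙 A - f := by simp [hg]
  set u : A ⟶ ⨁ B := biproduct.lift g with hu
  have hsm : IsSplitMono u := by
    refine IsSplitMono.mk' ⟨biproduct.desc fun _ => 𝟙 A, ?_⟩
    rw [hu, biproduct.lift_desc]
    simp [hg, Fin.sum_univ_two]
  obtain ⟨Cc, Dd, v, w, hcomp, hiso⟩ := hex 2 B u hsm
  set V : (⨁ Cc) ⟶ ⨁ B := biproduct.desc (fun i => v i ≫ biproduct.ι B i) with hV
  set Φ : A ⊞ (⨁ Cc) ⟶ ⨁ B := biprod.desc u V with hΦ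
  haveI : IsIso Φ := hiso
  set Ψ : (⨁ B) ⟶ A ⊞ (⨁ Cc) := inv Φ with hΨ
  set s : (⨁ B) ⟶ A := Ψ ≫ biprod.fst with hs
  set w' : (⨁ B) ⟶ ⨁ Cc := Ψ ≫ biprod.snd with hw'
  have hus : u ≫ s = 𝟙 A := by
    rw [hs, ← biprod.inl_desc u V, ← hΦ, Category.assoc, hΨ]
    rw [IsIso.hom_inv_id_assoc, biprod.inl_fst]
  have hVs : V ≫ s = 0 := by
    rw [hs, ← biprod.inr_desc u V, ← hΦ, Category.assoc, hΨ]
    rw [IsIso.hom_inv_id_assoc, biprod.inr_fst]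
  have htot : s ≫ u + w' ≫ V = 𝟙 (⨁ B) := by
    rw [hs, hw', Category.assoc, Category.assoc, ← Preadditive.comp_add, ← biprod.desc_eq,
      ← hΦ, hΨ, IsIso.inv_hom_id]
  have hgs : ∀ i, u ≫ biproduct.π B i = g i := fun i => by rw [hu, biproduct.lift_π]
  have hιV : ∀ i, biproduct.ι Cc i ≫ V = v i ≫ biproduct.ι B i := fun i => by
    rw [hV, biproduct.ι_desc]
  have hVπ : ∀ i, V ≫ biproduct.π B i = biproduct.π Cc i ≫ v i := by
    intro i
    apply biproduct.hom_ext'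
    intro k
    rw [← Category.assoc, hιV k, Category.assoc]
    by_cases hk : k = i
    · subst hk
      rw [biproduct.ι_π_self, Category.comp_id, ← Category.assoc, biproduct.ι_π_self,
        Category.id_comp]
    · rw [biproduct.ι_π_ne _ hk, comp_zero, ← Category.assoc, biproduct.ι_π_ne _ hk, zero_comp]
  have hvs : ∀ i, v i ≫ biproduct.ι B i ≫ s = 0 := by
    intro i
    rw [← Category.assoc, ← hιV i, Category.assoc, hVs, comp_zero]
  have hone : ∀ i, biproduct.ι B i ≫ s ≫ g i
      + biproduct.ι B i ≫ w' ≫ biproduct.π Cc i ≫ v i = 𝟙 A := by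
    intro i
    have h2 : biproduct.ι B i ≫ (s ≫ u + w' ≫ V) ≫ biproduct.π B i = 𝟙 A := by
      rw [htot, Category.id_comp, biproduct.ι_π_self]
    rw [Preadditive.add_comp, Preadditive.comp_add] at h2
    simp only [Category.assoc] at h2
    rw [hgs i] at h2
    rw [hVπ i] at h2
    exact h2
  have hidem_e : ∀ i : Fin 2, (biproduct.ι B i ≫ s ≫ g i) ≫ (biproduct.ι B i ≫ s ≫ g i)
      = biproduct.ι B i ≫ s ≫ g i := by
    intro i
    have h4 : (biproduct.ι B i ≫ w' ≫ biproduct.π Cc i ≫ v i)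
        ≫ (biproduct.ι B i ≫ s ≫ g i) = 0 := by
      simp only [Category.assoc]
      rw [reassoc_of% (hvs i)]
      simp
    have h5 := hone i
    have h6 : (biproduct.ι B i ≫ s ≫ g i + biproduct.ι B i ≫ w' ≫ biproduct.π Cc i ≫ v i)
        ≫ (biproduct.ι B i ≫ s ≫ g i) = biproduct.ι B i ≫ s ≫ g i := by
      rw [h5, Category.id_comp]
    rw [Preadditive.add_comp, h4, add_zero] at h6
    exact h6
  have hsum : f ≫ biproduct.ι B 0 ≫ s + (𝟙 A - f) ≫ biproduct.ι B 1 ≫ s = 𝟙 A := by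
    have h1 : u ≫ (∑ i : Fin 2, biproduct.π B i ≫ biproduct.ι B i) ≫ s = 𝟙 A := by
      rw [biproduct.total, Category.id_comp, hus]
    rw [Preadditive.sum_comp, Preadditive.comp_sum, Fin.sum_univ_two] at h1
    simp only [Category.assoc] at h1
    rw [reassoc_of% (hgs 0), reassoc_of% (hgs 1), hg0, hg1] at h1
    exact h1
  have one_side : ∀ x y : A ⟶ A, x ≫ y = 𝟙 A → IsUnit (M := End A) y := by
    intro x y hxy
    have hidem2 : (y ≫ x) ≫ (y ≫ x) = y ≫ x := by
      rw [Category.assoc, ← Category.assoc x, hxy, Category.id_comp]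
    rcases hidem _ hidem2 with h | h
    · exfalso
      have hx : x = 𝟙 A ≫ x := (Category.id_comp x).symm
      rw [← hxy, Category.assoc, h, comp_zero] at hx
      rw [hx, zero_comp] at hxy
      exact hne hxy.symm
    · exact ⟨⟨y, x, show x ≫ y = 𝟙 A from hxy, show y ≫ x = 𝟙 A from h⟩, rfl⟩
  rcases hidem _ (hidem_e 0) with he0 | he0
  · rcases hidem _ (hidem_e 1) with he1 | he1
    · -- both idempotents vanish : contradiction
      exfalso
      rw [hg0] at he0
      rw [hg1] at he1
      set x : A ⟶ A := f ≫ biproduct.ι B 0 ≫ s with hxdef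
      set y : A ⟶ A := (𝟙 A - f) ≫ biproduct.ι B 1 ≫ s with hydef
      have hxy : x + y = 𝟙 A := hsum
      have hxx : x ≫ x = 0 := by
        rw [hxdef]
        simp only [Category.assoc]
        rw [reassoc_of% he0]
        simp
      have hyy : y ≫ y = 0 := by
        rw [hydef]
        simp only [Category.assoc]
        rw [reassoc_of% he1]
        simp
      have hx : x ≫ y = x := by
        have h := congrArg (fun z => x ≫ z) hxy
        simp only [Preadditive.comp_add, Category.comp_id] at h
        rw [hxx, zero_add] at h
        exact h
      have hy : y ≫ x = y := by
        have h := congrArg (fun z => y ≫ z) hxy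
        simp only [Preadditive.comp_add, Category.comp_id] at h
        rw [hyy, add_zero] at h
        exact h
      have hx0 : x = 0 := by
        calc x = x ≫ y := hx.symm
          _ = x ≫ y ≫ x := by rw [hy]
          _ = (x ≫ y) ≫ x := (Category.assoc x y x).symm
          _ = x ≫ x := by rw [hx]
          _ = 0 := hxx
      have hy1 : y = 𝟙 A := by rw [hx0, zero_add] at hxy; exact hxy
      rw [hy1, Category.comp_id] at hyy
      exact hne hyy
    · -- 𝟙 - f is a unit
      right
      rw [hg1] at he1
      exact one_side (biproduct.ι B 1 ≫ s) (𝟙 A - f) (by rw [Category.assoc]; exact he1)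
  · -- f is a unit
    left
    rw [hg0] at he0
    exact one_side (biproduct.ι B 0 ≫ s) f (by rw [Category.assoc]; exact he0)

variable [IsIdempotentComplete C]

lemma local_to_finExchange (hl : IsLocalRing (End A)) : FinExchange A := by
  intro n B u hu
  classical
  set r : (⨁ B) ⟶ A := retraction u with hr
  have hur : u ≫ r = 𝟙 A := IsSplitMono.id u
  set f : Fin n → (A ⟶ A) := fun i => u ≫ biproduct.π B i ≫ biproduct.ι B i ≫ r with hf
  have hsum : ∑ i, f i = 𝟙 A := by
    have h1 : u ≫ (∑ i : Fin n, biproduct.π B i ≫ biproduct.ι B i) ≫ r = 𝟙 A := by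
      rw [biproduct.total, Category.id_comp, hur]
    rw [Preadditive.sum_comp, Preadditive.comp_sum] at h1
    simp only [Category.assoc] at h1
    rw [hf]
    exact h1
  have hunit : ∃ j, IsUnit (M := End A) (f j) := by
    have h1 : IsUnit (M := End A) (∑ i ∈ Finset.univ, f i) := by
      rw [show (∑ i ∈ Finset.univ, f i) = 𝟙 A from hsum]
      exact isUnit_one
    obtain ⟨j, _, hj⟩ := exists_isUnit_of_sum_eq_one (R := End A) Finset.univ f h1
    exact ⟨j, hj⟩
  obtain ⟨j, hj⟩ := hunit
  obtain ⟨gu, hgu⟩ := hj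
  set g : A ⟶ A := ((gu⁻¹ : (End A)ˣ) : End A) with hgdef
  have hfg : f j ≫ g = 𝟙 A := by
    have h := gu.inv_mul
    rw [hgu] at h
    exact h
  have hgf : g ≫ f j = 𝟙 A := by
    have h := gu.mul_inv
    rw [hgu] at h
    exact h
  set t : B j ⟶ A := biproduct.ι B j ≫ r ≫ g with ht
  -- helper rewriting lemmas
  have hιπ : ∀ {Z : C} (h' : B j ⟶ Z), biproduct.ι B j ≫ biproduct.π B j ≫ h' = h' := by
    intro Z h'
    rw [← Category.assoc, biproduct.ι_π_self, Category.id_comp]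
  have hιπne : ∀ {Z : C} (h' : B j ⟶ Z) (i : Fin n), i ≠ j →
      biproduct.ι B i ≫ biproduct.π B j ≫ h' = 0 := by
    intro Z h' i hij
    rw [← Category.assoc, biproduct.ι_π_ne _ hij, zero_comp]
  set S : (⨁ B) ⟶ A := biproduct.π B j ≫ t with hS
  have huS : u ≫ S = 𝟙 A := by
    rw [hS, ht]
    have h0 : f j = u ≫ biproduct.π B j ≫ biproduct.ι B j ≫ r := by simp only [hf]
    have h1 := hfg
    rw [h0] at h1
    simp only [Category.assoc] at h1
    exact h1
  have hut : u ≫ biproduct.π B j ≫ t = 𝟙 A := by rw [← hS]; exact huS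
  have hut' : ∀ {Z : C} (h' : A ⟶ Z), u ≫ biproduct.π B j ≫ t ≫ h' = h' := by
    intro Z h'
    have h1 : (u ≫ biproduct.π B j ≫ t) ≫ h' = 𝟙 A ≫ h' := by rw [hut]
    simp only [Category.assoc, Category.id_comp] at h1
    exact h1
  set E : (⨁ B) ⟶ ⨁ B := S ≫ u with hE
  have hιEj : biproduct.ι B j ≫ E = t ≫ u := by
    rw [hE, hS, ← Category.assoc, ← Category.assoc, biproduct.ι_π_self, Category.id_comp]
  have hιEne : ∀ i, i ≠ j → biproduct.ι B i ≫ E = 0 := by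
    intro i hij
    rw [hE, hS, ← Category.assoc, ← Category.assoc, biproduct.ι_π_ne _ hij, zero_comp, zero_comp]
  set e : ∀ i, B i ⟶ B i := fun i => biproduct.ι B i ≫ E ≫ biproduct.π B i with he
  have hej : e j = t ≫ u ≫ biproduct.π B j := by
    simp only [he]
    rw [← Category.assoc, hιEj, Category.assoc]
  have hene : ∀ i, i ≠ j → e i = 0 := by
    intro i hij
    simp only [he]
    rw [← Category.assoc, hιEne i hij, zero_comp]
  have hee : ∀ i, e i ≫ e i = e i := by
    intro i
    by_cases hij : i = j
    · subst hij
      rw [hej]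
      simp only [Category.assoc]
      rw [hut' (u ≫ biproduct.π B i)]
    · rw [hene i hij, zero_comp]
  obtain ⟨Cc, v, q, hvq, hqv⟩ : ∃ (Cc : Fin n → C) (v : ∀ i, Cc i ⟶ B i)
      (q : ∀ i, B i ⟶ Cc i), (∀ i, v i ≫ q i = 𝟙 (Cc i)) ∧
      (∀ i, q i ≫ v i = 𝟙 (B i) - e i) := by
    choose Cc v q h1 h2 using fun i => IsIdempotentComplete.idempotents_split (B i)
      (𝟙 (B i) - e i)
      (by simp only [Preadditive.sub_comp, Preadditive.comp_sub, Category.id_comp,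
            Category.comp_id, hee i]; abel)
    exact ⟨Cc, v, q, h1, h2⟩
  obtain ⟨Dd, w, ρ, hwρ, hρw⟩ : ∃ (Dd : Fin n → C) (w : ∀ i, Dd i ⟶ B i)
      (ρ : ∀ i, B i ⟶ Dd i), (∀ i, w i ≫ ρ i = 𝟙 (Dd i)) ∧
      (∀ i, ρ i ≫ w i = e i) := by
    choose Dd w ρ h1 h2 using fun i => IsIdempotentComplete.idempotents_split (B i)
      (e i) (hee i)
    exact ⟨Dd, w, ρ, h1, h2⟩
  have hve : ∀ i, v i ≫ e i = 0 := by
    intro i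
    have h := congrArg (fun z => v i ≫ z) (hqv i)
    simp only [Preadditive.comp_sub, Category.comp_id] at h
    rw [← Category.assoc, hvq i, Category.id_comp] at h
    exact sub_eq_self.mp h.symm
  have hwe : ∀ i, w i ≫ e i = w i := by
    intro i
    have h := congrArg (fun z => w i ≫ z) (hρw i)
    simp only [← Category.assoc] at h
    rw [hwρ i, Category.id_comp] at h
    exact h.symm
  haveI hmv : ∀ i, IsSplitMono (v i) := fun i => IsSplitMono.mk' ⟨q i, hvq i⟩
  haveI hmw : ∀ i, IsSplitMono (w i) := fun i => IsSplitMono.mk' ⟨ρ i, hwρ i⟩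
  have hvρ : ∀ i, v i ≫ ρ i = 0 := by
    intro i
    haveI := hmw i
    rw [← cancel_mono (w i), Category.assoc, hρw i, hve i, zero_comp]
  have hwq : ∀ i, w i ≫ q i = 0 := by
    intro i
    haveI := hmv i
    rw [← cancel_mono (v i), Category.assoc, hqv i, Preadditive.comp_sub, Category.comp_id,
      hwe i, sub_self, zero_comp]
  have hcompiso : ∀ i, IsIso (biprod.desc (v i) (w i)) := by
    intro i
    refine ⟨⟨biprod.lift (q i) (ρ i), ?_, ?_⟩⟩
    · apply biprod.hom_ext' <;> apply biprod.hom_ext <;>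
        simp [hvq i, hwρ i, hvρ i, hwq i]
    · rw [biprod.lift_desc, hqv i, hρw i]
      abel
  -- the big isomorphism
  set Vb : (⨁ Cc) ⟶ ⨁ B := biproduct.desc (fun i => v i ≫ biproduct.ι B i) with hVb
  set P : (⨁ B) ⟶ ⨁ Cc := biproduct.map q with hP
  set T : (⨁ B) ⟶ ⨁ Cc := (𝟙 (⨁ B) - E) ≫ P with hT
  have hιVb : ∀ i, biproduct.ι Cc i ≫ Vb = v i ≫ biproduct.ι B i := fun i => by
    rw [hVb, biproduct.ι_desc]
  have hvt : v j ≫ t = 0 := by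
    have h2 : (v j ≫ e j) ≫ t = 0 := by rw [hve j, zero_comp]
    rw [hej] at h2
    simp only [Category.assoc] at h2
    rw [hut, Category.comp_id] at h2
    exact h2
  have hVbS : Vb ≫ S = 0 := by
    apply biproduct.hom_ext'
    intro k
    rw [comp_zero, ← Category.assoc, hιVb k, Category.assoc, hS]
    by_cases hk : k = j
    · subst hk
      rw [hιπ t, hvt]
    · rw [hιπne t k hk, comp_zero]
  have huT : u ≫ T = 0 := by
    have h1 : u ≫ (𝟙 (⨁ B) - E) = 0 := by
      rw [Preadditive.comp_sub, Category.comp_id, hE, ← Category.assoc, huS, Category.id_comp,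
        sub_self]
    rw [hT, ← Category.assoc, h1, zero_comp]
  have hVbT : Vb ≫ T = 𝟙 (⨁ Cc) := by
    have h1 : Vb ≫ (𝟙 (⨁ B) - E) = Vb := by
      rw [Preadditive.comp_sub, Category.comp_id, hE, ← Category.assoc, hVbS, zero_comp,
        sub_zero]
    have h2 : Vb ≫ P = 𝟙 (⨁ Cc) := by
      apply biproduct.hom_ext'
      intro k
      rw [← Category.assoc, hιVb k, Category.assoc, hP, biproduct.ι_map, ← Category.assoc,
        hvq k, Category.id_comp, Category.comp_id]
    rw [hT, ← Category.assoc, h1, h2]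
  set M : (⨁ B) ⟶ ⨁ B := biproduct.map e with hM
  have hPVb : P ≫ Vb = 𝟙 (⨁ B) - M := by
    apply biproduct.hom_ext'
    intro k
    rw [← Category.assoc, hP, biproduct.ι_map, Category.assoc, hιVb k, ← Category.assoc,
      hqv k]
    rw [Preadditive.comp_sub, Category.comp_id, hM, biproduct.ι_map, Preadditive.sub_comp,
      Category.id_comp]
  have huM : u ≫ M = u ≫ biproduct.π B j ≫ biproduct.ι B j := by
    apply biproduct.hom_ext
    intro k
    have hlhs : (u ≫ M) ≫ biproduct.π B k = u ≫ biproduct.π B k ≫ e k := by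
      rw [Category.assoc, hM, biproduct.map_π]
    rw [hlhs]
    by_cases hk : k = j
    · subst hk
      have hrhs : (u ≫ biproduct.π B k ≫ biproduct.ι B k) ≫ biproduct.π B k
          = u ≫ biproduct.π B k := by
        simp only [Category.assoc]
        rw [biproduct.ι_π_self, Category.comp_id]
      rw [hrhs, hej]
      rw [hut' (u ≫ biproduct.π B k)]
    · rw [hene k hk, comp_zero, comp_zero]
      have hrhs : (u ≫ biproduct.π B j ≫ biproduct.ι B j) ≫ biproduct.π B k = 0 := by
        simp only [Category.assoc]
        rw [biproduct.ι_π_ne _ (Ne.symm hk), comp_zero, comp_zero]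
      rw [hrhs]
  have hEM : E ≫ M = M := by
    apply biproduct.hom_ext'
    intro k
    by_cases hk : k = j
    · subst hk
      rw [← Category.assoc, hιEj, Category.assoc, huM, hM, biproduct.ι_map, hej]
      simp only [Category.assoc]
    · rw [← Category.assoc, hιEne k hk, zero_comp, hM, biproduct.ι_map, hene k hk, zero_comp]
  refine ⟨Cc, Dd, v, w, hcompiso, ⟨⟨biprod.lift S T, ?_, ?_⟩⟩⟩
  · apply biprod.hom_ext' <;> apply biprod.hom_ext <;>
      simp [huS, huT, hVbS, hVbT, ← hVb]
  · rw [biprod.lift_desc, ← hVb, ← hE, hT, Category.assoc, hPVb]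
    simp only [Preadditive.sub_comp, Preadditive.comp_sub, Category.id_comp, Category.comp_id,
      hEM]
    abel

end Main

/-- In an idempotent complete additive category, an indecomposable object `A` has the finite
exchange property if and only if `End A` is a local ring. -/
theorem stmt_7 {C : Type*} [Category C] [Preadditive C] [HasFiniteBiproducts C]
    [HasBinaryBiproducts C] [IsIdempotentComplete C] (A : C) (hA : IndecomposableObj A) :
    FinExchange A ↔ IsLocalRing (End A) := by
  constructor
  · intro hex
    have hne : 𝟙 A ≠ 0 := fun h => hA.1 ((IsZero.iff_id_eq_zero A).mpr h)
    have hidem : ∀ e : A ⟶ A, e ≫ e = e → e = 0 ∨ e = 𝟙 A := fun e he => idem_trivial hA e he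
    haveI : Nontrivial (End A) := ⟨⟨𝟙 A, 0, hne⟩⟩
    refine ⟨fun {a b} hab => ?_⟩
    rcases key_unit hne hidem hex a with h | h
    · exact Or.inl h
    · right
      have hb : b = 1 - a := eq_sub_of_add_eq' hab
      rw [hb]
      exact h
  · intro hl
    exact local_to_finExchange hl
end

section
/- Let C be an idempotent complete additive category and X = A₁ ⊕ ⋯ ⊕ A_n = B ⊕ C a pair of direct decompositions of an object X. If End(B) is a local ring, then there exists j ∈ {1,…,n} and a decomposition A_j = A_j' ⊕ D such that X = B ⊕ A_j' ⊕ (⊕_{i≠j} A_i). -/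
open CategoryTheory CategoryTheory.Limits

private lemma isUnit_or_isUnit_of_isUnit_add' {R : Type*} [Ring R] [IsLocalRing R]
    {a b : R} (h : IsUnit (a + b)) : IsUnit a ∨ IsUnit b := by
  rcases h with ⟨u, hu⟩
  have h1 : a * ↑u⁻¹ + b * ↑u⁻¹ = 1 := by rw [← add_mul, ← hu, Units.mul_inv]
  rcases IsLocalRing.isUnit_or_isUnit_of_add_one h1 with h | h
  · left
    have := h.mul u.isUnit
    rwa [Units.inv_mul_cancel_right] at this
  · right
    have := h.mul u.isUnit
    rwa [Units.inv_mul_cancel_right] at this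

private lemma exists_isUnit_of_isUnit_sum {R : Type*} [Ring R] [IsLocalRing R]
    {ι : Type*} (s : Finset ι) (f : ι → R)
    (h : IsUnit (∑ i ∈ s, f i)) : ∃ i ∈ s, IsUnit (f i) := by
  classical
  induction s using Finset.induction_on with
  | empty =>
    simp only [Finset.sum_empty] at h
    exact absurd h not_isUnit_zero
  | @insert a s ha ih =>
    rw [Finset.sum_insert ha] at h
    rcases isUnit_or_isUnit_of_isUnit_add' h with h | h
    · exact ⟨a, Finset.mem_insert_self _ _, h⟩
    · obtain ⟨i, hi, hu⟩ := ih h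
      exact ⟨i, Finset.mem_insert_of_mem hi, hu⟩

/-- Let `X = A₁ ⊕ ⋯ ⊕ Aₙ = B ⊕ C` be two direct decompositions of `X` in an idempotent
complete additive category. If `End B` is local, then there is `j` and a decomposition
`A j = A' ⊕ D` such that `X = B ⊕ A' ⊕ (⊕_{i ≠ j} A i)`, via the given canonical
morphisms. -/
theorem stmt_8 {C : Type*} [Category C] [Preadditive C] [HasFiniteBiproducts C]
    [HasBinaryBiproducts C] [IsIdempotentComplete C]
    (X B Co : C) (n : ℕ) (A : Fin n → C) (a : ∀ i, A i ⟶ X) (uB : B ⟶ X) (uC : Co ⟶ X)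
    (hA : IsIso (biproduct.desc a)) (hBC : IsIso (biprod.desc uB uC))
    (hloc : IsLocalRing (End B)) :
    ∃ (j : Fin n) (A' D : C) (v : A' ⟶ A j) (w : D ⟶ A j),
      IsIso (biprod.desc v w) ∧
      IsIso (biprod.desc uB (biprod.desc (v ≫ a j)
        (biproduct.desc (fun i : {i : Fin n // i ≠ j} => a i.1)))) := by
  classical
  obtain ⟨q, hq⟩ : ∃ q : X ⟶ ⨁ A, q = inv (biproduct.desc a) := ⟨_, rfl⟩
  obtain ⟨π, hπ⟩ : ∃ π : ∀ i, X ⟶ A i, π = fun i => q ≫ biproduct.π A i := ⟨_, rfl⟩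
  obtain ⟨p, hp⟩ : ∃ p : X ⟶ B, p = inv (biprod.desc uB uC) ≫ biprod.fst := ⟨_, rfl⟩
  have h0 : uB ≫ inv (biprod.desc uB uC) = biprod.inl := by
    rw [IsIso.comp_inv_eq, biprod.inl_desc]
  have huBp : uB ≫ p = 𝟙 B := by rw [hp, ← Category.assoc, h0, biprod.inl_fst]
  have haq : ∀ i, a i ≫ q = biproduct.ι A i := by
    intro i
    rw [hq, IsIso.comp_inv_eq, biproduct.ι_desc]
  have haπ_self : ∀ i, a i ≫ π i = 𝟙 (A i) := by
    intro i
    rw [hπ, ← Category.assoc, haq, biproduct.ι_π_self]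
  have haπ_ne : ∀ i k, i ≠ k → a i ≫ π k = 0 := by
    intro i k hik
    rw [hπ, ← Category.assoc, haq, biproduct.ι_π_ne _ hik]
  have hid : ∑ i, π i ≫ a i = 𝟙 X := by
    have h1 : ∑ i, π i ≫ a i = q ≫ (∑ i, biproduct.π A i ≫ biproduct.ι A i) ≫
        biproduct.desc a := by
      rw [Preadditive.sum_comp, Preadditive.comp_sum]
      simp [hπ, Category.assoc]
    rw [h1, biproduct.total, Category.id_comp, hq, IsIso.inv_hom_id]
  -- find the index j with a unit component
  obtain ⟨F, hF⟩ : ∃ F : Fin n → End B, F = fun i => (uB ≫ π i ≫ a i ≫ p : B ⟶ B) :=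
    ⟨_, rfl⟩
  have hsum : ∑ i, F i = (1 : End B) := by
    rw [hF]
    show ∑ i, (uB ≫ π i ≫ a i ≫ p : B ⟶ B) = 𝟙 B
    have h2 : ∑ i, uB ≫ π i ≫ a i ≫ p = uB ≫ (∑ i, π i ≫ a i) ≫ p := by
      rw [Preadditive.sum_comp, Preadditive.comp_sum]
      simp [Category.assoc]
    rw [h2, hid, Category.id_comp, huBp]
  obtain ⟨j, -, hu⟩ := exists_isUnit_of_isUnit_sum Finset.univ F
    (by rw [hsum]; exact isUnit_one)
  obtain ⟨ε, hε⟩ : ∃ ε : B ⟶ B, ε = (↑hu.unit⁻¹ : End B) := ⟨_, rfl⟩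
  have hεe : (F j : B ⟶ B) ≫ ε = 𝟙 B := by
    have h1 := hu.unit.inv_mul
    rw [End.mul_def, hu.unit_spec] at h1
    rw [hε]; exact h1
  obtain ⟨f, hf⟩ : ∃ f : B ⟶ A j, f = uB ≫ π j := ⟨_, rfl⟩
  obtain ⟨g, hg⟩ : ∃ g : A j ⟶ B, g = a j ≫ p := ⟨_, rfl⟩
  have hfg : f ≫ g = (F j : B ⟶ B) := by rw [hf, hg, hF]; simp [Category.assoc]
  obtain ⟨r, hr⟩ : ∃ r : A j ⟶ B, r = g ≫ ε := ⟨_, rfl⟩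
  have hfr : f ≫ r = 𝟙 B := by rw [hr, ← Category.assoc, hfg, hεe]
  obtain ⟨ρ, hρ⟩ : ∃ ρ : A j ⟶ A j, ρ = r ≫ f := ⟨_, rfl⟩
  have hρρ : ρ ≫ ρ = ρ := by
    rw [hρ, Category.assoc, ← Category.assoc f, hfr, Category.id_comp]
  have hidem : (𝟙 (A j) - ρ) ≫ (𝟙 (A j) - ρ) = 𝟙 (A j) - ρ := by
    simp [Preadditive.sub_comp, Preadditive.comp_sub, hρρ]
  obtain ⟨A', iA', pA', hip, hpi⟩ :=
    IsIdempotentComplete.idempotents_split (A j) (𝟙 (A j) - ρ) hidem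
  have hiρ : iA' ≫ ρ = 0 := by
    have h1 : iA' ≫ (𝟙 (A j) - ρ) = iA' := by
      rw [← hpi, ← Category.assoc, hip, Category.id_comp]
    rw [Preadditive.comp_sub, Category.comp_id] at h1
    linear_combination (norm := abel) -h1
  have hir : iA' ≫ r = 0 := by
    have h1 : (iA' ≫ ρ) ≫ r = iA' ≫ r := by
      rw [hρ, Category.assoc, Category.assoc, hfr, Category.comp_id]
    rw [hiρ, Limits.zero_comp] at h1
    exact h1.symm
  have hfρ : f ≫ (𝟙 (A j) - ρ) = 0 := by
    rw [Preadditive.comp_sub, Category.comp_id, hρ, ← Category.assoc, hfr,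
      Category.id_comp, sub_self]
  have hfpA : f ≫ pA' = 0 := by
    have h2 : (f ≫ pA') ≫ iA' = 0 := by rw [Category.assoc, hpi, hfρ]
    have h1 : f ≫ pA' = ((f ≫ pA') ≫ iA') ≫ pA' := by
      rw [Category.assoc, hip, Category.comp_id]
    rw [h1, h2, Limits.zero_comp]
  have hdesc : IsIso (biprod.desc iA' f) := by
    refine ⟨biprod.lift pA' r, ?_, ?_⟩
    · apply biprod.hom_ext' <;> apply biprod.hom_ext <;>
        simp [hip, hir, hfr, hfpA]
    · rw [biprod.lift_desc, hpi, ← hρ]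
      abel
  refine ⟨j, A', B, iA', f, hdesc, ?_⟩
  -- helper component identities
  have haπ_self' : ∀ i {Z : C} (h : A i ⟶ Z), a i ≫ π i ≫ h = h := by
    intro i Z h
    rw [← Category.assoc, haπ_self, Category.id_comp]
  have haπ_ne' : ∀ i k, i ≠ k → ∀ {Z : C} (h : A k ⟶ Z), a i ≫ π k ≫ h = 0 := by
    intro i k hik Z h
    rw [← Category.assoc, haπ_ne _ _ hik, Limits.zero_comp]
  have hsub : ∀ (i k : {i : Fin n // i ≠ j}), a i.1 ≫ π k.1 =
      biproduct.ι (fun i : {i : Fin n // i ≠ j} => A i.1) i ≫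
      biproduct.π (fun i : {i : Fin n // i ≠ j} => A i.1) k := by
    intro i k
    by_cases hik : i = k
    · subst hik
      rw [haπ_self, biproduct.ι_π_self]
    · rw [haπ_ne _ _ (fun h => hik (Subtype.ext h)), biproduct.ι_π_ne _ hik]
  -- the reference isomorphism Ψ and its inverse
  obtain ⟨Ψ, hΨ⟩ : ∃ Ψ : B ⊞ (A' ⊞ ⨁ (fun i : {i : Fin n // i ≠ j} => A i.1)) ⟶ X,
      Ψ = biprod.desc (f ≫ a j) (biprod.desc (iA' ≫ a j)
        (biproduct.desc (fun i : {i : Fin n // i ≠ j} => a i.1))) := ⟨_, rfl⟩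
  obtain ⟨Ψi, hΨi⟩ : ∃ Ψi : X ⟶ B ⊞ (A' ⊞ ⨁ (fun i : {i : Fin n // i ≠ j} => A i.1)),
      Ψi = biprod.lift (π j ≫ r) (biprod.lift (π j ≫ pA')
        (biproduct.lift (fun i : {i : Fin n // i ≠ j} => π i.1))) := ⟨_, rfl⟩
  have hne1 : ∀ (i : {i : Fin n // i ≠ j}) {Z : C} (h : A j ⟶ Z),
      a i.1 ≫ π j ≫ h = 0 := fun i _ h => haπ_ne' i.1 j i.2 h
  have hne2 : ∀ (i : {i : Fin n // i ≠ j}) {Z : C} (h : A i.1 ⟶ Z),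
      a j ≫ π i.1 ≫ h = 0 := fun i _ h => haπ_ne' j i.1 (Ne.symm i.2) h
  have hne1' : ∀ (i : {i : Fin n // i ≠ j}), a i.1 ≫ π j = 0 :=
    fun i => haπ_ne i.1 j i.2
  have hne2' : ∀ (i : {i : Fin n // i ≠ j}), a j ≫ π i.1 = 0 :=
    fun i => haπ_ne j i.1 (Ne.symm i.2)
  have hΨΨi : Ψ ≫ Ψi = 𝟙 _ := by
    rw [hΨ, hΨi]
    ext
    all_goals
      simp [Category.assoc, haπ_self', haπ_ne', hsub, hfr, hfpA, hip, hir,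
        hne1, hne2, hne1', hne2']
  have hΨiΨ : Ψi ≫ Ψ = 𝟙 X := by
    rw [hΨi, hΨ, biprod.lift_desc, biprod.lift_desc, biproduct.lift_desc]
    have h1 : (π j ≫ r) ≫ (f ≫ a j) = π j ≫ ρ ≫ a j := by
      rw [hρ]; simp [Category.assoc]
    have h2 : (π j ≫ pA') ≫ (iA' ≫ a j) = π j ≫ (𝟙 (A j) - ρ) ≫ a j := by
      rw [← hpi]; simp [Category.assoc]
    have h3 : ∑ i : {i : Fin n // i ≠ j}, π i.1 ≫ a i.1 =
        ∑ i ∈ Finset.univ.erase j, π i ≫ a i :=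
      (Finset.sum_subtype (Finset.univ.erase j)
        (fun x => by simp [Finset.mem_erase]) (fun i => π i ≫ a i)).symm
    rw [h1, h2, ← add_assoc, ← Preadditive.comp_add, ← Preadditive.add_comp,
      show ρ + (𝟙 (A j) - ρ) = 𝟙 (A j) by abel, Category.id_comp, h3, ← hid]
    exact Finset.add_sum_erase Finset.univ (fun i => π i ≫ a i) (Finset.mem_univ j)
  -- correcting the B-component from f ≫ a j to uB
  obtain ⟨d, hd⟩ : ∃ d : B ⟶ B ⊞ (A' ⊞ ⨁ (fun i : {i : Fin n // i ≠ j} => A i.1)),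
      d = uB ≫ Ψi - biprod.inl := ⟨_, rfl⟩
  have hd0 : uB ≫ Ψi ≫ biprod.fst = 𝟙 B := by
    rw [hΨi, biprod.lift_fst, ← Category.assoc, ← hf, hfr]
  have hdf : d ≫ biprod.fst = 0 := by
    rw [hd, Preadditive.sub_comp, Category.assoc, hd0, biprod.inl_fst, sub_self]
  obtain ⟨δ, hδ⟩ : ∃ δ : B ⊞ (A' ⊞ ⨁ (fun i : {i : Fin n // i ≠ j} => A i.1)) ⟶
      B ⊞ (A' ⊞ ⨁ (fun i : {i : Fin n // i ≠ j} => A i.1)),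
      δ = biprod.fst ≫ d := ⟨_, rfl⟩
  have hdd : δ ≫ δ = 0 := by
    rw [hδ, Category.assoc, ← Category.assoc d, hdf, Limits.zero_comp,
      Limits.comp_zero]
  obtain ⟨Φ, hΦ⟩ : ∃ Φ, Φ = biprod.desc uB (biprod.desc (iA' ≫ a j)
      (biproduct.desc (fun i : {i : Fin n // i ≠ j} => a i.1))) := ⟨_, rfl⟩
  have hT : Φ ≫ Ψi = 𝟙 _ + δ := by
    apply biprod.hom_ext'
    · rw [← Category.assoc, hΦ, biprod.inl_desc, Preadditive.comp_add,
        Category.comp_id, hδ, ← Category.assoc, biprod.inl_fst, Category.id_comp, hd]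
      abel
    · rw [← Category.assoc, hΦ, biprod.inr_desc, Preadditive.comp_add,
        Category.comp_id, hδ, ← Category.assoc, biprod.inr_fst, Limits.zero_comp,
        add_zero]
      have hinr : biprod.desc (iA' ≫ a j)
          (biproduct.desc (fun i : {i : Fin n // i ≠ j} => a i.1)) =
          biprod.inr ≫ Ψ := by rw [hΨ, biprod.inr_desc]
      rw [hinr, Category.assoc, hΨΨi, Category.comp_id]
  have hcancel1 : (𝟙 _ + δ) ≫ (𝟙 _ - δ) = 𝟙 _ := by
    simp only [Preadditive.add_comp, Preadditive.comp_sub, Category.id_comp,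
      Category.comp_id, hdd]
    abel
  have hcancel2 : (𝟙 _ - δ) ≫ (𝟙 _ + δ) = 𝟙 _ := by
    simp only [Preadditive.sub_comp, Preadditive.comp_add, Category.id_comp,
      Category.comp_id, hdd]
    abel
  have hΦΨ : Φ = (𝟙 _ + δ) ≫ Ψ := by
    rw [← hT, Category.assoc, hΨiΨ, Category.comp_id]
  rw [← hΦ]
  refine ⟨Ψi ≫ (𝟙 _ - δ), ?_, ?_⟩
  · rw [← Category.assoc, hT, hcancel1]
  · rw [Category.assoc, hΦΨ, ← Category.assoc (𝟙 _ - δ), hcancel2,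
      Category.id_comp, hΨiΨ]
end

section
/- In any additive category, a finite direct sum of objects with the finite exchange property has the finite exchange property. -/
open CategoryTheory CategoryTheory.Limits

section Aux

variable {C : Type*} [Category C] [Preadditive C] [HasFiniteBiproducts C]
    [HasBinaryBiproducts C]

lemma finExchange_of_isZero {Z : C} (hZ : IsZero Z) : FinExchange Z := by
  intro n B u _
  refine ⟨B, fun _ => Z, fun i => 𝟙 _, fun _ => 0, ?_, ?_⟩
  · intro i
    refine ⟨biprod.inl, ?_, by simp⟩
    apply biprod.hom_ext'
    · simp
    · apply hZ.eq_of_src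
  · have hu : u = 0 := hZ.eq_of_src u 0
    have hJ : biproduct.desc (fun i => (fun i => 𝟙 (B i)) i ≫ biproduct.ι B i) = 𝟙 (⨁ B) := by
      apply biproduct.hom_ext'
      intro j
      simp
    rw [hJ, hu]
    refine ⟨biprod.inr, ?_, by simp⟩
    apply biprod.hom_ext'
    · apply (hZ.eq_of_src _ _)
    · simp

lemma finExchange_of_iso {A A' : C} (e : A' ≅ A) (h : FinExchange A) : FinExchange A' := by
  intro n B u hu
  have hu' : IsSplitMono (e.inv ≫ u) :=
    ⟨⟨⟨retraction u ≫ e.hom, by simp⟩⟩⟩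
  obtain ⟨Cc, Dd, v, w, h1, h2⟩ := h n B (e.inv ≫ u) hu'
  refine ⟨Cc, Dd, v, w, h1, ?_⟩
  have key : biprod.desc u (biproduct.desc fun i => v i ≫ biproduct.ι B i)
      = biprod.map e.hom (𝟙 _) ≫
        biprod.desc (e.inv ≫ u) (biproduct.desc fun i => v i ≫ biproduct.ι B i) := by
    apply biprod.hom_ext' <;> simp
  rw [key]
  haveI : IsIso (biprod.map e.hom (𝟙 (⨁ Cc))) :=
    inferInstanceAs (IsIso (biprod.mapIso e (Iso.refl (⨁ Cc))).hom)
  haveI : IsIso (biprod.desc (e.inv ≫ u) (biproduct.desc fun i => v i ≫ biproduct.ι B i)) := h2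
  infer_instance

/-- Peeling off the first summand of a `Fin (n+1)`-indexed biproduct. -/
noncomputable def biproductFinSuccIso {n : ℕ} (A : Fin (n + 1) → C) :
    ⨁ A ≅ A 0 ⊞ ⨁ (fun i : Fin n => A i.succ) where
  hom := biprod.lift (biproduct.π A 0) (biproduct.lift fun i => biproduct.π A i.succ)
  inv := biprod.desc (biproduct.ι A 0) (biproduct.desc fun i => biproduct.ι A i.succ)
  hom_inv_id := by
    rw [biprod.lift_desc, biproduct.lift_desc, ← biproduct.total, Fin.sum_univ_succ]
  inv_hom_id := by
    apply biprod.hom_ext'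
    · apply biprod.hom_ext
      · simp
      · apply biproduct.hom_ext
        intro j
        simp [biproduct.ι_π, (Fin.succ_ne_zero j).symm]
    · apply biprod.hom_ext
      · apply biproduct.hom_ext'
        intro j
        simp [biproduct.ι_π, Fin.succ_ne_zero j]
      · apply biproduct.hom_ext'
        intro j
        apply biproduct.hom_ext
        intro k
        simp [biproduct.ι_π, Fin.succ_inj]

lemma finExchange_biprod (X Y : C) (hX : FinExchange X) (hY : FinExchange Y) :
    FinExchange (X ⊞ Y) := by
  intro n B u hu
  obtain ⟨t, ht⟩ : ∃ t : ⨁ B ⟶ X ⊞ Y, u ≫ t = 𝟙 _ := ⟨retraction u, by simp⟩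
  -- Step 1: apply exchange for X to the split mono `inl ≫ u`.
  have hu1 : IsSplitMono (biprod.inl ≫ u) :=
    ⟨⟨⟨t ≫ biprod.fst, by
      rw [Category.assoc, ← Category.assoc u, ht, Category.id_comp, biprod.inl_fst]⟩⟩⟩
  obtain ⟨C1, D1, v1, w1, hvw1, hi1⟩ := hX n B (biprod.inl ≫ u) hu1
  set j1 : ⨁ C1 ⟶ ⨁ B := biproduct.desc (fun i => v1 i ≫ biproduct.ι B i) with hj1
  set e1 : X ⊞ ⨁ C1 ⟶ ⨁ B := biprod.desc (biprod.inl ≫ u) j1 with he1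
  haveI : IsIso e1 := hi1
  have hinl1 : biprod.inl ≫ e1 = biprod.inl ≫ u := biprod.inl_desc _ _
  have hinr1 : biprod.inr ≫ e1 = j1 := biprod.inr_desc _ _
  -- Step 2: `Y` embeds split-monically into `⨁ C1`.
  set g : Y ⟶ X := biprod.inr ≫ u ≫ inv e1 ≫ biprod.fst with hg
  set u2 : Y ⟶ ⨁ C1 := biprod.inr ≫ u ≫ inv e1 ≫ biprod.snd with hu2def
  have hsnd_inr : (biprod.snd ≫ biprod.inr : X ⊞ ⨁ C1 ⟶ _)
      = 𝟙 _ - biprod.fst ≫ biprod.inl := by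
    rw [← biprod.total]; abel
  have key2 : u2 ≫ j1 = biprod.inr ≫ u - g ≫ (biprod.inl ≫ u) := by
    calc u2 ≫ j1
        = biprod.inr ≫ u ≫ inv e1 ≫ (biprod.snd ≫ biprod.inr) ≫ e1 := by
          rw [hu2def, ← hinr1]; simp only [Category.assoc]
      _ = biprod.inr ≫ u ≫ inv e1 ≫ (𝟙 _ - biprod.fst ≫ biprod.inl) ≫ e1 := by
          rw [hsnd_inr]
      _ = biprod.inr ≫ u - g ≫ (biprod.inl ≫ u) := by
          simp only [Preadditive.sub_comp, Preadditive.comp_sub, Category.id_comp,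
            Category.assoc, IsIso.inv_hom_id, Category.comp_id, hinl1, hg]
  have hu2 : IsSplitMono u2 := by
    refine ⟨⟨⟨j1 ≫ t ≫ biprod.snd, ?_⟩⟩⟩
    rw [← Category.assoc, key2]
    simp only [Preadditive.sub_comp, Category.assoc]
    rw [← Category.assoc u t, ht]
    simp
  obtain ⟨C2, D2, v2, w2, hvw2, hi2⟩ := hY n C1 u2 hu2
  set j2 : ⨁ C2 ⟶ ⨁ C1 := biproduct.desc (fun i => v2 i ≫ biproduct.ι C1 i) with hj2
  set e2 : Y ⊞ ⨁ C2 ⟶ ⨁ C1 := biprod.desc u2 j2 with he2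
  haveI : IsIso e2 := hi2
  -- Assemble the answer.
  refine ⟨C2, fun i => D2 i ⊞ D1 i, fun i => v2 i ≫ v1 i,
    fun i => biprod.desc (w2 i ≫ v1 i) (w1 i), ?_, ?_⟩
  · intro i
    haveI := hvw1 i
    haveI := hvw2 i
    have hfac : biprod.desc (v2 i ≫ v1 i) (biprod.desc (w2 i ≫ v1 i) (w1 i))
        = (biprod.associator (C2 i) (D2 i) (D1 i)).inv ≫
          biprod.map (biprod.desc (v2 i) (w2 i)) (𝟙 (D1 i)) ≫
          biprod.desc (v1 i) (w1 i) := by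
      apply biprod.hom_ext'
      · simp [biprod.lift_eq, biprod.map_eq, Preadditive.comp_add, Preadditive.add_comp,
          Category.assoc]
      · apply biprod.hom_ext' <;>
          simp [biprod.lift_eq, biprod.map_eq, Preadditive.comp_add, Preadditive.add_comp,
            Category.assoc]
    rw [hfac]
    haveI : IsIso (biprod.map (biprod.desc (v2 i) (w2 i)) (𝟙 (D1 i))) :=
      inferInstanceAs (IsIso (biprod.mapIso (asIso (biprod.desc (v2 i) (w2 i)))
        (Iso.refl (D1 i))).hom)
    infer_instance
  · have hJ : biproduct.desc (fun i => (v2 i ≫ v1 i) ≫ biproduct.ι B i) = j2 ≫ j1 := by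
      apply biproduct.hom_ext'
      intro i
      simp [hj1, hj2]
    set N : (X ⊞ Y) ⊞ ⨁ C2 ⟶ (X ⊞ Y) ⊞ ⨁ C2 :=
      biprod.fst ≫ biprod.snd ≫ g ≫ biprod.inl ≫ biprod.inl with hN
    have hNN : N ≫ N = 0 := by
      simp [hN]
    set Θ : (X ⊞ Y) ⊞ ⨁ C2 ⟶ ⨁ B :=
      (biprod.associator X Y (⨁ C2)).hom ≫ biprod.map (𝟙 X) e2 ≫ e1 with hΘ
    haveI : IsIso (biprod.map (𝟙 X) e2) :=
      inferInstanceAs (IsIso (biprod.mapIso (Iso.refl X) (asIso e2)).hom)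
    haveI : IsIso Θ := by rw [hΘ]; infer_instance
    haveI hE : IsIso (𝟙 ((X ⊞ Y) ⊞ ⨁ C2) + N) := by
      refine ⟨𝟙 _ - N, ?_, ?_⟩ <;>
        simp [Preadditive.add_comp, Preadditive.comp_sub, Preadditive.sub_comp,
          Preadditive.comp_add, hNN]
    have hmain : biprod.desc u (j2 ≫ j1) = (𝟙 _ + N) ≫ Θ := by
      apply biprod.hom_ext'
      · apply biprod.hom_ext'
        · -- X component
          simp [hΘ, hN, hinl1, hinr1, he2, biprod.lift_eq, biprod.map_eq,
            Preadditive.comp_add, Preadditive.add_comp, Category.assoc]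
        · -- Y component
          have hYcomp : biprod.inr ≫ biprod.inl ≫ (𝟙 ((X ⊞ Y) ⊞ ⨁ C2) + N) ≫ Θ
              = u2 ≫ j1 + g ≫ (biprod.inl ≫ u) := by
            simp [hΘ, hN, hinl1, hinr1, he2, biprod.lift_eq, biprod.map_eq,
              Preadditive.comp_add, Preadditive.add_comp, Category.assoc]
            abel
          rw [hYcomp, key2]
          simp
      · -- ⨁ C2 component
        simp [hΘ, hN, hinl1, hinr1, he2, biprod.lift_eq, biprod.map_eq,
          Preadditive.comp_add, Preadditive.add_comp, Category.assoc]
    rw [hJ, hmain]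
    infer_instance

end Aux

/-- In any additive category, a finite direct sum of objects with the finite exchange
property has the finite exchange property. -/
theorem stmt_9 {C : Type*} [Category C] [Preadditive C] [HasFiniteBiproducts C]
    [HasBinaryBiproducts C] (n : ℕ) (A : Fin n → C) (h : ∀ i, FinExchange (A i)) :
    FinExchange (⨁ A) := by
  induction n with
  | zero =>
      refine finExchange_of_isZero ?_
      rw [IsZero.iff_id_eq_zero]
      apply biproduct.hom_ext
      intro j
      exact j.elim0
  | succ m ih =>
      exact finExchange_of_iso (biproductFinSuccIso A)
        (finExchange_biprod _ _ (h 0) (ih _ (fun i => h i.succ)))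
end

section
/- Let C be an idempotent complete additive category and X = A₁ ⊕ ⋯ ⊕ A_n = B ⊕ C, where B is indecomposable and each End(A_i) is local. Then there exists j ∈ {1,…,n} such that X = B ⊕ (⊕_{i≠j} A_i); in particular B ≅ A_j. -/
set_option linter.unusedSectionVars false

open CategoryTheory CategoryTheory.Limits

section Helpers

variable {C : Type*} [Category C] [Preadditive C] [HasBinaryBiproducts C]

lemma indec_idem [IsIdempotentComplete C]
    {B : C} (hB : IndecomposableObj B) (e : B ⟶ B) (he : e ≫ e = e) :
    e = 0 ∨ e = 𝟙 B := by
  obtain ⟨Y, i1, r1, h1, h1'⟩ := IsIdempotentComplete.idempotents_split B e he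
  obtain ⟨Z, i2, r2, h2, h2'⟩ := IsIdempotentComplete.idempotents_split B (𝟙 B - e) (by
    simp only [Preadditive.sub_comp, Preadditive.comp_sub, Category.comp_id, Category.id_comp, he]
    abel)
  have hi1 : i1 ≫ r2 = 0 := by
    have : i1 = i1 ≫ e := by rw [← h1', ← Category.assoc, h1, Category.id_comp]
    rw [this, Category.assoc]
    have : e ≫ r2 = 0 := by
      have h4 : (e ≫ r2) ≫ i2 = 0 := by
        rw [Category.assoc, h2', Preadditive.comp_sub, Category.comp_id, he, sub_self]
      calc e ≫ r2 = ((e ≫ r2) ≫ i2) ≫ r2 := by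
            simp only [Category.assoc, h2, Category.comp_id]
        _ = 0 := by rw [h4, zero_comp]
    rw [this, comp_zero]
  have hi2 : i2 ≫ r1 = 0 := by
    have : i2 = i2 ≫ (𝟙 B - e) := by rw [← h2', ← Category.assoc, h2, Category.id_comp]
    rw [this, Category.assoc]
    have : (𝟙 B - e) ≫ r1 = 0 := by
      have h4 : ((𝟙 B - e) ≫ r1) ≫ i1 = 0 := by
        rw [Category.assoc, h1', Preadditive.sub_comp, Category.id_comp, he, sub_self]
      calc (𝟙 B - e) ≫ r1 = (((𝟙 B - e) ≫ r1) ≫ i1) ≫ r1 := by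
            simp only [Category.assoc, h1, Category.comp_id]
        _ = 0 := by rw [h4, zero_comp]
    rw [this, comp_zero]
  have hiso : Nonempty (B ≅ Y ⊞ Z) := by
    refine ⟨⟨biprod.lift r1 r2, biprod.desc i1 i2, ?_, ?_⟩⟩
    · rw [biprod.lift_desc, h1', h2']; abel
    · apply biprod.hom_ext' <;> apply biprod.hom_ext <;>
        simp [h1, h2, hi1, hi2]
  rcases hB.2 Y Z hiso with hz | hz
  · left
    have : i1 = 0 := hz.eq_of_src i1 0
    rw [← h1', this, comp_zero]
  · right
    have : i2 = 0 := hz.eq_of_src i2 0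
    have h0 : 𝟙 B - e = 0 := by rw [← h2', this, comp_zero]
    exact (sub_eq_zero.mp h0).symm

lemma isIso_of_retract [IsIdempotentComplete C] {A B : C} (hB : IndecomposableObj B)
    (f : B ⟶ A) (g : A ⟶ B) (hgf : g ≫ f = 𝟙 A) (hA : (𝟙 A : A ⟶ A) ≠ 0) : IsIso f := by
  have he : (f ≫ g) ≫ (f ≫ g) = f ≫ g := by
    rw [Category.assoc, ← Category.assoc g f, hgf, Category.id_comp]
  rcases indec_idem hB (f ≫ g) he with h | h
  · exfalso
    apply hA
    calc (𝟙 A : A ⟶ A) = (g ≫ f) ≫ (g ≫ f) := by rw [hgf, Category.id_comp]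
      _ = g ≫ (f ≫ g) ≫ f := by simp only [Category.assoc]
      _ = 0 := by rw [h, zero_comp, comp_zero]
  · exact ⟨g, h, hgf⟩

lemma isIso_desc_left {A' A W X : C} (u : A ⟶ X) (w : W ⟶ X)
    [hk : IsIso (biprod.desc u w)] (u' : A' ⟶ X)
    (hc : IsIso (u' ≫ inv (biprod.desc u w) ≫ biprod.fst)) :
    IsIso (biprod.desc u' w) := by
  set k := biprod.desc u w with hkdef
  set c := u' ≫ inv k ≫ biprod.fst with hcdef
  set d := u' ≫ inv k ≫ biprod.snd with hddef
  have hlift : biprod.lift c d = u' ≫ inv k := by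
    apply biprod.hom_ext <;> simp [hcdef, hddef]
  set φ : A' ⊞ W ⟶ A ⊞ W := biprod.desc (biprod.lift c d) biprod.inr with hφ
  have hφk : φ ≫ k = biprod.desc u' w := by
    apply biprod.hom_ext' <;> simp [hφ, hlift, hkdef]
  have : IsIso φ := by
    refine ⟨biprod.desc (biprod.lift (inv c) (-(inv c ≫ d))) biprod.inr, ?_, ?_⟩
    · apply biprod.hom_ext' <;> apply biprod.hom_ext <;>
        simp [hφ]
    · apply biprod.hom_ext' <;> apply biprod.hom_ext <;>
        simp [hφ]
  rw [← hφk]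
  infer_instance

lemma isIso_desc_right {A W W' X : C} (u : A ⟶ X) (w : W ⟶ X)
    [hk : IsIso (biprod.desc u w)] (w' : W' ⟶ X)
    (hc : IsIso (w' ≫ inv (biprod.desc u w) ≫ biprod.snd)) :
    IsIso (biprod.desc u w') := by
  set k := biprod.desc u w with hkdef
  set c := w' ≫ inv k ≫ biprod.snd with hcdef
  set d := w' ≫ inv k ≫ biprod.fst with hddef
  have hlift : biprod.lift d c = w' ≫ inv k := by
    apply biprod.hom_ext <;> simp [hcdef, hddef]
  set φ : A ⊞ W' ⟶ A ⊞ W := biprod.desc biprod.inl (biprod.lift d c) with hφ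
  have hφk : φ ≫ k = biprod.desc u w' := by
    apply biprod.hom_ext' <;> simp [hφ, hlift, hkdef]
  have : IsIso φ := by
    refine ⟨biprod.desc biprod.inl (biprod.lift (-(inv c ≫ d)) (inv c)), ?_, ?_⟩
    · apply biprod.hom_ext' <;> apply biprod.hom_ext <;>
        simp [hφ]
    · apply biprod.hom_ext' <;> apply biprod.hom_ext <;>
        simp [hφ]
  rw [← hφk]
  infer_instance

lemma isIso_iff_corner {A W D : C} (Ξ : A ⊞ W ⟶ A ⊞ D)
    (h : biprod.inl ≫ Ξ = biprod.inl) :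
    IsIso Ξ ↔ IsIso (biprod.inr ≫ Ξ ≫ biprod.snd) := by
  set y := biprod.inr ≫ Ξ ≫ biprod.fst with hy
  set z := biprod.inr ≫ Ξ ≫ biprod.snd with hz
  set N : A ⊞ W ⟶ A ⊞ W := biprod.snd ≫ y ≫ biprod.inl with hN
  have hNN : N ≫ N = 0 := by simp [hN]
  have hE : IsIso (𝟙 (A ⊞ W) - N) := by
    refine ⟨𝟙 (A ⊞ W) + N, ?_, ?_⟩ <;>
      simp [Preadditive.sub_comp, Preadditive.comp_sub, Preadditive.add_comp,
        Preadditive.comp_add, hNN]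
  have key : (𝟙 (A ⊞ W) - N) ≫ Ξ = biprod.map (𝟙 A) z := by
    apply biprod.hom_ext' <;> apply biprod.hom_ext <;>
      simp [hN, hy, hz, Preadditive.sub_comp, Preadditive.comp_sub,
        reassoc_of% h, h]
  constructor
  · intro hΞ
    have : IsIso (biprod.map (𝟙 A) z) := by rw [← key]; infer_instance
    refine ⟨biprod.inr ≫ inv (biprod.map (𝟙 A) z) ≫ biprod.snd, ?_, ?_⟩
    · have h1 : z ≫ biprod.inr = biprod.inr ≫ biprod.map (𝟙 A) z := by simp
      rw [← Category.assoc, h1, Category.assoc]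
      simp
    · have h2 : biprod.map (𝟙 A) z ≫ biprod.snd = biprod.snd ≫ z := by simp
      calc (biprod.inr ≫ inv (biprod.map (𝟙 A) z) ≫ biprod.snd) ≫ z
          = biprod.inr ≫ (inv (biprod.map (𝟙 A) z) ≫ biprod.map (𝟙 A) z) ≫ biprod.snd := by
            simp only [Category.assoc]; rw [← h2]
        _ = 𝟙 D := by rw [IsIso.inv_hom_id, Category.id_comp, biprod.inr_snd]
  · intro hzI
    have : IsIso (biprod.map (𝟙 A) z) := by
      have : biprod.map (𝟙 A) z = (biprod.mapIso (Iso.refl A) (asIso z)).hom := by simp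
      rw [this]; infer_instance
    have : IsIso ((𝟙 (A ⊞ W) - N) ≫ Ξ) := by rw [key]; infer_instance
    exact IsIso.of_isIso_comp_left (𝟙 (A ⊞ W) - N) Ξ

end Helpers

open CategoryTheory CategoryTheory.Limits

section SplitOne
variable {C : Type*} [Category C] [Preadditive C] [HasFiniteBiproducts C]
  [HasBinaryBiproducts C]
variable {ι : Type} [Fintype ι] [DecidableEq ι] (A : ι → C) (i₀ : ι)

noncomputable def fr : (⨁ fun i : {i : ι // i ≠ i₀} => A i.1) ⟶ ⨁ A :=
  biproduct.desc fun i => biproduct.ι A i.1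

noncomputable def tS : (⨁ A) ⟶ ⨁ fun i : {i : ι // i ≠ i₀} => A i.1 :=
  biproduct.lift fun i => biproduct.π A i.1

lemma fr_tS : fr A i₀ ≫ tS A i₀ = 𝟙 _ := by
  apply biproduct.hom_ext'
  intro i
  apply biproduct.hom_ext
  intro k
  simp only [fr, tS, Category.assoc, biproduct.lift_π, biproduct.ι_desc_assoc,
    Category.comp_id, Category.id_comp]
  by_cases h : i = k
  · subst h; simp
  · rw [biproduct.ι_π_ne _ (fun hh => h (Subtype.ext hh)), biproduct.ι_π_ne _ h]

lemma ι_tS : biproduct.ι A i₀ ≫ tS A i₀ = 0 := by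
  apply biproduct.hom_ext
  intro k
  simp only [tS, Category.assoc, biproduct.lift_π, zero_comp]
  rw [biproduct.ι_π_ne _ (fun hh => k.2 hh.symm)]

lemma fr_π : fr A i₀ ≫ biproduct.π A i₀ = 0 := by
  apply biproduct.hom_ext'
  intro i
  simp only [fr, biproduct.ι_desc_assoc, comp_zero]
  rw [biproduct.ι_π_ne _ i.2]

lemma split_total : biproduct.π A i₀ ≫ biproduct.ι A i₀ + tS A i₀ ≫ fr A i₀ = 𝟙 (⨁ A) := by
  rw [← biproduct.total, tS, fr, biproduct.lift_desc,
    ← Finset.add_sum_erase _ _ (Finset.mem_univ i₀)]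
  congr 1
  rw [← Finset.sum_subtype (Finset.univ.erase i₀)
    (fun x => by simp [Finset.mem_erase]) (fun j => biproduct.π A j ≫ biproduct.ι A j)]

noncomputable def splitIso : (A i₀ ⊞ ⨁ fun i : {i : ι // i ≠ i₀} => A i.1) ≅ ⨁ A where
  hom := biprod.desc (biproduct.ι A i₀) (fr A i₀)
  inv := biprod.lift (biproduct.π A i₀) (tS A i₀)
  hom_inv_id := by
    apply biprod.hom_ext' <;> apply biprod.hom_ext <;>
      simp [fr_π, ι_tS, fr_tS, biproduct.ι_π_self]
  inv_hom_id := by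
    rw [biprod.lift_desc, split_total]

@[simp] lemma splitIso_hom :
    (splitIso A i₀).hom = biprod.desc (biproduct.ι A i₀) (fr A i₀) := rfl

@[simp] lemma splitIso_inv :
    (splitIso A i₀).inv = biprod.lift (biproduct.π A i₀) (tS A i₀) := rfl

lemma ι_tS_of_ne (v : ι) (hv : v ≠ i₀) :
    biproduct.ι A v ≫ tS A i₀ = biproduct.ι (fun i : {i : ι // i ≠ i₀} => A i.1) ⟨v, hv⟩ := by
  apply biproduct.hom_ext
  intro kk
  simp only [tS, Category.assoc, biproduct.lift_π]
  by_cases h : (⟨v, hv⟩ : {i : ι // i ≠ i₀}) = kk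
  · subst h; rw [biproduct.ι_π_self, biproduct.ι_π_self]
  · rw [biproduct.ι_π_ne _ (fun hh => h (Subtype.ext hh)), biproduct.ι_π_ne _ h]

end SplitOne

section Swap
variable {C : Type*} [Category C] [Preadditive C] [HasBinaryBiproducts C]

lemma isIso_swap (P Q R : C) : IsIso ((biprod.desc (biprod.inl ≫ biprod.inr)
    (biprod.desc biprod.inl (biprod.inr ≫ biprod.inr))) : P ⊞ (Q ⊞ R) ⟶ Q ⊞ (P ⊞ R)) := by
  refine ⟨biprod.desc (biprod.inl ≫ biprod.inr)
    (biprod.desc biprod.inl (biprod.inr ≫ biprod.inr)), ?_, ?_⟩ <;>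
  · apply biprod.hom_ext' <;> [skip; apply biprod.hom_ext'] <;> simp

end Swap

set_option maxHeartbeats 1000000 in
theorem key {C : Type*} [Category C] [Preadditive C] [HasFiniteBiproducts C]
    [HasBinaryBiproducts C] [IsIdempotentComplete C] (m : ℕ) :
    ∀ {ι : Type} [Fintype ι] [DecidableEq ι], Fintype.card ι = m →
    ∀ (X B Co : C) (A : ι → C) (a : ∀ i, A i ⟶ X) (uB : B ⟶ X) (uC : Co ⟶ X),
    IsIso (biproduct.desc a) → IsIso (biprod.desc uB uC) →
    IndecomposableObj B → (∀ i, IsLocalRing (End (A i))) →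
    ∃ j : ι, IsIso (biprod.desc uB (biproduct.desc (fun i : {i : ι // i ≠ j} => a i.1)))
      ∧ Nonempty (B ≅ A j) := by
  induction m with
  | zero =>
    intro ι _ _ hcard X B Co A a uB uC hA hBC hB hloc
    exfalso
    apply hB.1
    have hempty : IsEmpty ι := Fintype.card_eq_zero_iff.mp hcard
    have hz : IsZero (⨁ A) := by
      rw [IsZero.iff_id_eq_zero]
      apply biproduct.hom_ext'
      intro i; exact hempty.elim i
    have hX : IsZero X := hz.of_iso (asIso (biproduct.desc a)).symm
    have h1 : uB ≫ inv (biprod.desc uB uC) ≫ biprod.fst = 𝟙 B := by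
      calc uB ≫ inv (biprod.desc uB uC) ≫ biprod.fst
          = (biprod.inl ≫ biprod.desc uB uC) ≫ inv (biprod.desc uB uC) ≫ biprod.fst := by
            rw [biprod.inl_desc]
        _ = 𝟙 B := by rw [Category.assoc, IsIso.hom_inv_id_assoc, biprod.inl_fst]
    rw [IsZero.iff_id_eq_zero, ← h1, hX.eq_of_src (inv (biprod.desc uB uC) ≫ biprod.fst) 0,
      comp_zero]
  | succ m ih =>
    intro ι _ _ hcard X B Co A a uB uC hA hBC hB hloc
    obtain ⟨i₀⟩ : Nonempty ι := Fintype.card_pos_iff.mp (by omega)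
    set k := biprod.desc uB uC with hk
    set g := biproduct.desc a with hg
    set pB := inv k ≫ biprod.fst with hpB
    set pC := inv k ≫ biprod.snd with hpC
    have huBk : biprod.inl ≫ k = uB := biprod.inl_desc _ _
    have huCk : biprod.inr ≫ k = uC := biprod.inr_desc _ _
    have haig : ∀ i, biproduct.ι A i ≫ g = a i := fun i => biproduct.ι_desc _ _
    have huBpB : uB ≫ pB = 𝟙 B := by
      rw [hpB, ← huBk, Category.assoc, IsIso.hom_inv_id_assoc, biprod.inl_fst]
    have huBpC : uB ≫ pC = 0 := by
      rw [hpC, ← huBk, Category.assoc, IsIso.hom_inv_id_assoc, biprod.inl_snd]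
    have huCpB : uC ≫ pB = 0 := by
      rw [hpB, ← huCk, Category.assoc, IsIso.hom_inv_id_assoc, biprod.inr_fst]
    have huCpC : uC ≫ pC = 𝟙 Co := by
      rw [hpC, ← huCk, Category.assoc, IsIso.hom_inv_id_assoc, biprod.inr_snd]
    have hsum : pB ≫ uB + pC ≫ uC = 𝟙 X := by
      have h5 : pB ≫ uB + pC ≫ uC
          = inv k ≫ (biprod.fst ≫ biprod.inl + biprod.snd ≫ biprod.inr) ≫ k := by
        rw [hpB, hpC, ← huBk, ← huCk]
        simp only [Preadditive.comp_add, Preadditive.add_comp, Category.assoc]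
      rw [h5, biprod.total, Category.id_comp, IsIso.inv_hom_id]
    have haπ : ∀ i, a i ≫ inv g ≫ biproduct.π A i = 𝟙 (A i) := fun i => by
      rw [← haig i, Category.assoc, IsIso.hom_inv_id_assoc, biproduct.ι_π_self]
    have haπne : ∀ i j, i ≠ j → a i ≫ inv g ≫ biproduct.π A j = 0 := fun i j hij => by
      rw [← haig i, Category.assoc, IsIso.hom_inv_id_assoc, biproduct.ι_π_ne _ hij]
    have hone : ∀ i, (𝟙 (A i) : A i ⟶ A i) ≠ 0 := by
      intro i h0
      haveI := hloc i
      exact one_ne_zero (α := End (A i)) h0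
    set π₀ := inv g ≫ biproduct.π A i₀ with hπ₀
    set α := a i₀ ≫ pB ≫ uB ≫ π₀ with hα
    set β := a i₀ ≫ pC ≫ uC ≫ π₀ with hβ
    have hαβ : α + β = 𝟙 (A i₀) := by
      rw [hα, hβ, ← Preadditive.comp_add]
      have h5 : pB ≫ uB ≫ π₀ + pC ≫ uC ≫ π₀ = (pB ≫ uB + pC ≫ uC) ≫ π₀ := by
        simp only [Preadditive.add_comp, Category.assoc]
      rw [h5, hsum, Category.id_comp, hπ₀, haπ i₀]
    haveI := hloc i₀
    have hunit : IsIso α ∨ IsIso β := by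
      have hcases := @IsLocalRing.isUnit_or_isUnit_of_add_one (End (A i₀)) _ _ α β
        (show α + β = (1 : End (A i₀)) from hαβ)
      rcases hcases with h | h
      · exact Or.inl ((isUnit_iff_isIso (f := α)).mp h)
      · exact Or.inr ((isUnit_iff_isIso (f := β)).mp h)
    rcases hunit with hα' | hβ'
    · -- Case A : B ≅ A i₀ and exchange at i₀
      haveI := hα'
      set f := uB ≫ π₀ with hf
      set gg := inv α ≫ a i₀ ≫ pB with hgg
      have h5 : (a i₀ ≫ pB) ≫ f = α := by rw [hα]; simp only [Category.assoc]
      have hgf : gg ≫ f = 𝟙 (A i₀) := by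
        rw [hgg]
        calc (inv α ≫ a i₀ ≫ pB) ≫ f = inv α ≫ ((a i₀ ≫ pB) ≫ f) := by
              simp only [Category.assoc]
          _ = 𝟙 (A i₀) := by rw [h5, IsIso.inv_hom_id]
      have hfiso : IsIso f := isIso_of_retract hB f gg hgf (hone i₀)
      refine ⟨i₀, ?_, ⟨asIso f⟩⟩
      have hfrg : fr A i₀ ≫ g = biproduct.desc (fun i : {i : ι // i ≠ i₀} => a i.1) := by
        apply biproduct.hom_ext'
        intro i
        simp only [fr, biproduct.ι_desc_assoc, biproduct.ι_desc, haig]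
      have hM : biprod.desc uB (biproduct.desc fun i : {i : ι // i ≠ i₀} => a i.1)
          = biprod.desc (uB ≫ inv g) (fr A i₀) ≫ g := by
        apply biprod.hom_ext'
        · rw [biprod.inl_desc, biprod.inl_desc_assoc, Category.assoc, IsIso.inv_hom_id,
            Category.comp_id]
        · rw [biprod.inr_desc, biprod.inr_desc_assoc, hfrg]
      rw [hM]
      haveI : IsIso (biprod.desc (biproduct.ι A i₀) (fr A i₀)) := (splitIso A i₀).isIso_hom
      haveI hdesc : IsIso (biprod.desc (uB ≫ inv g) (fr A i₀)) := by
        apply isIso_desc_left (biproduct.ι A i₀) (fr A i₀) (uB ≫ inv g) ?_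
        · have hinv : inv (biprod.desc (biproduct.ι A i₀) (fr A i₀))
              = biprod.lift (biproduct.π A i₀) (tS A i₀) :=
            IsIso.inv_eq_of_hom_inv_id (splitIso A i₀).hom_inv_id
          rw [hinv]
          have h6 : (uB ≫ inv g) ≫ biprod.lift (biproduct.π A i₀) (tS A i₀) ≫ biprod.fst
              = f := by
            rw [biprod.lift_fst, hf, hπ₀, Category.assoc]
          rw [h6]
          exact hfiso
      infer_instance
    · -- Case B
      haveI := hβ'
      set fCm := uC ≫ π₀ with hfCm
      set gCm := inv β ≫ a i₀ ≫ pC with hgCm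
      have h5 : (a i₀ ≫ pC) ≫ fCm = β := by rw [hβ]; simp only [Category.assoc]
      have hgf : gCm ≫ fCm = 𝟙 (A i₀) := by
        rw [hgCm]
        calc (inv β ≫ a i₀ ≫ pC) ≫ fCm = inv β ≫ ((a i₀ ≫ pC) ≫ fCm) := by
              simp only [Category.assoc]
          _ = 𝟙 (A i₀) := by rw [h5, IsIso.inv_hom_id]
      have hq : (𝟙 Co - fCm ≫ gCm) ≫ (𝟙 Co - fCm ≫ gCm) = 𝟙 Co - fCm ≫ gCm := by
        have e1 : (fCm ≫ gCm) ≫ fCm ≫ gCm = fCm ≫ gCm := by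
          calc (fCm ≫ gCm) ≫ fCm ≫ gCm = fCm ≫ (gCm ≫ fCm) ≫ gCm := by
                simp only [Category.assoc]
            _ = fCm ≫ gCm := by rw [hgf, Category.id_comp]
        simp only [Preadditive.sub_comp, Preadditive.comp_sub, Category.id_comp,
          Category.comp_id, e1]
        abel
      obtain ⟨C', i', r', hir', hri'⟩ :=
        IsIdempotentComplete.idempotents_split Co (𝟙 Co - fCm ≫ gCm) hq
      have hgr' : gCm ≫ r' = 0 := by
        have h6 : gCm ≫ (𝟙 Co - fCm ≫ gCm) = 0 := by
          rw [Preadditive.comp_sub, Category.comp_id, ← Category.assoc, hgf,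
            Category.id_comp, sub_self]
        calc gCm ≫ r' = ((gCm ≫ r') ≫ i') ≫ r' := by
              simp only [Category.assoc, hir', Category.comp_id]
          _ = (gCm ≫ (r' ≫ i')) ≫ r' := by simp only [Category.assoc]
          _ = 0 := by rw [hri', h6, zero_comp]
      have hi'f : i' ≫ fCm = 0 := by
        have h7 : (𝟙 Co - fCm ≫ gCm) ≫ fCm = 0 := by
          rw [Preadditive.sub_comp, Category.id_comp, Category.assoc, hgf,
            Category.comp_id, sub_self]
        calc i' ≫ fCm = (i' ≫ (r' ≫ i')) ≫ fCm := by
              simp only [← Category.assoc, hir', Category.id_comp]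
          _ = (i' ≫ (𝟙 Co - fCm ≫ gCm)) ≫ fCm := by rw [hri']
          _ = i' ≫ ((𝟙 Co - fCm ≫ gCm) ≫ fCm) := by simp only [Category.assoc]
          _ = 0 := by rw [h7, comp_zero]
      have huBpB' := reassoc_of% huBpB
      have huBpC' := reassoc_of% huBpC
      have huCpB' := reassoc_of% huCpB
      have huCpC' := reassoc_of% huCpC
      have hgf' := reassoc_of% hgf
      have hgr'' := reassoc_of% hgr'
      have hi'f' := reassoc_of% hi'f
      have hir'' := reassoc_of% hir'
      set u₁ := gCm ≫ uC with hu₁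
      set w := biprod.desc uB (i' ≫ uC) with hw
      have hΘΛ : biprod.desc u₁ w ≫ biprod.lift (pC ≫ fCm) (biprod.lift pB (pC ≫ r')) = 𝟙 _ := by
        apply biprod.hom_ext' <;> (try apply biprod.hom_ext') <;>
          apply biprod.hom_ext <;> (try apply biprod.hom_ext) <;>
          simp [hu₁, hw, huBpB', huBpC', huCpB', huCpC', hgf', hgr'', hi'f', huBpB, huBpC,
            huCpB, huCpC, hgf, hgr', hi'f, hir']
      have hΛΘ : biprod.lift (pC ≫ fCm) (biprod.lift pB (pC ≫ r')) ≫ biprod.desc u₁ w = 𝟙 X := by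
        rw [biprod.lift_desc, hw, biprod.lift_desc, hu₁]
        have e2 : (pC ≫ r') ≫ i' ≫ uC = pC ≫ (𝟙 Co - fCm ≫ gCm) ≫ uC := by
          rw [← hri']; simp only [Category.assoc]
        have e1 : (pC ≫ fCm) ≫ gCm ≫ uC = pC ≫ (fCm ≫ gCm) ≫ uC := by
          simp only [Category.assoc]
        rw [e1, e2]
        have e3 : pC ≫ (fCm ≫ gCm) ≫ uC + (pB ≫ uB + pC ≫ (𝟙 Co - fCm ≫ gCm) ≫ uC)
            = pB ≫ uB + pC ≫ uC := by
          simp only [Preadditive.sub_comp, Preadditive.comp_sub, Category.id_comp]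
          abel
        rw [e3, hsum]
      haveI hΘiso : IsIso (biprod.desc u₁ w) := ⟨⟨_, hΘΛ, hΛΘ⟩⟩
      have hinvΘ : inv (biprod.desc u₁ w)
          = biprod.lift (pC ≫ fCm) (biprod.lift pB (pC ≫ r')) :=
        IsIso.inv_eq_of_hom_inv_id hΘΛ
      haveI hΘa : IsIso (biprod.desc (a i₀) w) := by
        apply isIso_desc_left u₁ w (a i₀) ?_
        rw [hinvΘ]
        have h8 : a i₀ ≫ biprod.lift (pC ≫ fCm) (biprod.lift pB (pC ≫ r')) ≫ biprod.fst
            = β := by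
          rw [biprod.lift_fst, hβ]
        rw [h8]
        exact hβ'
      have hainv : ∀ v, a v ≫ inv g = biproduct.ι A v := fun v => by
        rw [← haig v, Category.assoc, IsIso.hom_inv_id, Category.comp_id]
      have hainl : a i₀ ≫ inv g ≫ biprod.lift (biproduct.π A i₀) (tS A i₀) = biprod.inl := by
        rw [← Category.assoc, hainv i₀]
        apply biprod.hom_ext
        · rw [Category.assoc, biprod.lift_fst, biproduct.ι_π_self, biprod.inl_fst]
        · rw [Category.assoc, biprod.lift_snd, ι_tS, biprod.inl_snd]
      set G' := biprod.lift (biproduct.π A i₀) (tS A i₀) with hG'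
      haveI hG'iso : IsIso G' := by
        rw [hG', ← splitIso_inv]
        infer_instance
      have hΞinl : biprod.inl ≫ biprod.desc (a i₀) w ≫ inv g ≫ G' = biprod.inl := by
        rw [biprod.inl_desc_assoc, hainl]
      have hΞiso : IsIso (biprod.desc (a i₀) w ≫ inv g ≫ G') := inferInstance
      have hcornerIso : IsIso (biprod.inr ≫ (biprod.desc (a i₀) w ≫ inv g ≫ G') ≫ biprod.snd) :=
        (isIso_iff_corner _ hΞinl).mp hΞiso
      set ρ := inv g ≫ tS A i₀ with hρ
      have hcorner_eq : biprod.inr ≫ (biprod.desc (a i₀) w ≫ inv g ≫ G') ≫ biprod.snd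
          = biprod.desc (uB ≫ ρ) ((i' ≫ uC) ≫ ρ) := by
        rw [hρ, hG']
        simp only [biprod.inr_desc_assoc, Category.assoc, biprod.lift_snd]
        rw [hw]
        apply biprod.hom_ext' <;>
          simp only [biprod.inl_desc_assoc, biprod.inr_desc_assoc, biprod.inl_desc,
            biprod.inr_desc, Category.assoc]
      have hcard' : Fintype.card {i : ι // i ≠ i₀} = m := by
        have h9 : Fintype.card {i : ι // ¬ i = i₀}
            = Fintype.card ι - Fintype.card {i : ι // i = i₀} :=
          Fintype.card_subtype_compl _
        rw [Fintype.card_subtype_eq, hcard] at h9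
        exact h9
      have hA' : IsIso (biproduct.desc fun i : {i : ι // i ≠ i₀} =>
          biproduct.ι (fun i : {i : ι // i ≠ i₀} => A i.1) i) := by
        have h10 : (biproduct.desc fun i : {i : ι // i ≠ i₀} =>
            biproduct.ι (fun i : {i : ι // i ≠ i₀} => A i.1) i) = 𝟙 _ := by
          apply biproduct.hom_ext'
          intro i
          rw [biproduct.ι_desc, Category.comp_id]
        rw [h10]
        infer_instance
      obtain ⟨j', hj'1, hj'2⟩ := ih hcard' (⨁ fun i : {i : ι // i ≠ i₀} => A i.1) B C'
        (fun i => A i.1) (fun i => biproduct.ι (fun i : {i : ι // i ≠ i₀} => A i.1) i)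
        (uB ≫ ρ) ((i' ≫ uC) ≫ ρ) hA'
        (by rw [← hcorner_eq]; exact hcornerIso) hB (fun i => hloc i.1)
      refine ⟨j'.1, ?_, hj'2⟩
      have hij : i₀ ≠ j'.1 := Ne.symm j'.2
      -- notation
      set S := splitIso (fun i : {i : ι // i ≠ j'.1} => A i.1) ⟨i₀, hij⟩ with hS
      set descI₃ := biproduct.desc (fun i :
          {i : {i : ι // i ≠ j'.1} // i ≠ ⟨i₀, hij⟩} => a i.1.1) with hdescI₃
      set M₃ := biprod.desc (a i₀) (biprod.desc uB descI₃) with hM₃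
      set M₂ := biprod.desc uB (biprod.desc (a i₀) descI₃) with hM₂
      -- step 1 : map (𝟙 B) S.hom ≫ M = M₂
      have hSM : S.hom ≫ biproduct.desc (fun i : {i : ι // i ≠ j'.1} => a i.1)
          = biprod.desc (a i₀) descI₃ := by
        rw [hS, splitIso_hom, hdescI₃]
        apply biprod.hom_ext'
        · rw [biprod.inl_desc_assoc, biproduct.ι_desc, biprod.inl_desc]
        · rw [biprod.inr_desc_assoc, biprod.inr_desc]
          apply biproduct.hom_ext'
          intro i
          simp only [fr, biproduct.ι_desc_assoc, biproduct.ι_desc]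
      have hMM₂ : biprod.map (𝟙 B) S.hom ≫
          biprod.desc uB (biproduct.desc (fun i : {i : ι // i ≠ j'.1} => a i.1)) = M₂ := by
        rw [hM₂]
        apply biprod.hom_ext'
        · rw [← Category.assoc, biprod.inl_map, Category.assoc, biprod.inl_desc,
            biprod.inl_desc, Category.id_comp]
        · rw [← Category.assoc, biprod.inr_map, Category.assoc, biprod.inr_desc,
            biprod.inr_desc, hSM]
      -- step 2 : swap
      have hswap : biprod.desc (biprod.inl ≫ biprod.inr)
          (biprod.desc biprod.inl (biprod.inr ≫ biprod.inr)) ≫ M₂ = M₃ := by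
        rw [hM₂, hM₃]
        apply biprod.hom_ext' <;> [skip; apply biprod.hom_ext'] <;>
          simp only [biprod.inl_desc_assoc, biprod.inr_desc_assoc, biprod.inl_desc,
            biprod.inr_desc, Category.assoc, biprod.inl_desc_assoc]
      -- step 3 : corner argument for M₃
      have hΞ₂inl : biprod.inl ≫ M₃ ≫ inv g ≫ G' = biprod.inl := by
        rw [hM₃, biprod.inl_desc_assoc, hainl]
      have hcorner₂eq : biprod.inr ≫ (M₃ ≫ inv g ≫ G') ≫ biprod.snd
          = biprod.desc (uB ≫ ρ) (descI₃ ≫ ρ) := by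
        rw [hM₃, hρ, hG']
        simp only [biprod.inr_desc_assoc, Category.assoc, biprod.lift_snd]
        apply biprod.hom_ext' <;>
          simp only [biprod.inl_desc_assoc, biprod.inr_desc_assoc, biprod.inl_desc,
            biprod.inr_desc, Category.assoc]
      -- reindexing t between the two complements
      set t := biproduct.desc (fun i : {i : {i : ι // i ≠ j'.1} // i ≠ ⟨i₀, hij⟩} =>
        biproduct.ι (fun kk : {kk : {i : ι // i ≠ i₀} // kk ≠ j'} => A kk.1.1)
          ⟨⟨i.1.1, fun h => i.2 (Subtype.ext h)⟩,
            fun h => i.1.2 (congrArg Subtype.val h)⟩) with ht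
      set t' := biproduct.desc (fun kk : {kk : {i : ι // i ≠ i₀} // kk ≠ j'} =>
        biproduct.ι (fun i : {i : {i : ι // i ≠ j'.1} // i ≠ ⟨i₀, hij⟩} => A i.1.1)
          ⟨⟨kk.1.1, fun h => kk.2 (Subtype.ext h)⟩,
            fun h => kk.1.2 (congrArg Subtype.val h)⟩) with ht'
      haveI htiso : IsIso t := by
        refine ⟨t', ?_, ?_⟩
        · rw [ht, ht']
          apply biproduct.hom_ext'
          intro i
          rw [biproduct.ι_desc_assoc, biproduct.ι_desc, Category.comp_id]
        · rw [ht, ht']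
          apply biproduct.hom_ext'
          intro kk
          rw [biproduct.ι_desc_assoc, biproduct.ι_desc, Category.comp_id]
      have hQ : descI₃ ≫ ρ = t ≫ biproduct.desc (fun kk : {kk : {i : ι // i ≠ i₀} // kk ≠ j'} =>
          biproduct.ι (fun i : {i : ι // i ≠ i₀} => A i.1) kk.1) := by
        rw [hdescI₃, ht, hρ]
        apply biproduct.hom_ext'
        intro i
        rw [biproduct.ι_desc_assoc, biproduct.ι_desc_assoc, biproduct.ι_desc,
          ← Category.assoc, hainv, ι_tS_of_ne _ _ _ (fun h => i.2 (Subtype.ext h))]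
      have hfinal : biprod.desc (uB ≫ ρ) (descI₃ ≫ ρ)
          = biprod.map (𝟙 B) t ≫ biprod.desc (uB ≫ ρ)
            (biproduct.desc (fun kk : {kk : {i : ι // i ≠ i₀} // kk ≠ j'} =>
              biproduct.ι (fun i : {i : ι // i ≠ i₀} => A i.1) kk.1)) := by
        apply biprod.hom_ext'
        · rw [biprod.inl_desc, biprod.inl_map_assoc, Category.id_comp, biprod.inl_desc]
        · rw [biprod.inr_desc, biprod.inr_map_assoc, biprod.inr_desc, hQ]
      haveI hmaptiso : IsIso (biprod.map (𝟙 B) t) := by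
        have hmt : biprod.map (𝟙 B) t = (biprod.mapIso (Iso.refl B) (asIso t)).hom := by simp
        rw [hmt]
        infer_instance
      haveI := hj'1
      have hcorner₂iso : IsIso (biprod.inr ≫ (M₃ ≫ inv g ≫ G') ≫ biprod.snd) := by
        rw [hcorner₂eq, hfinal]
        infer_instance
      haveI hΞ₂iso : IsIso (M₃ ≫ inv g ≫ G') := (isIso_iff_corner _ hΞ₂inl).mpr hcorner₂iso
      haveI hM₃iso : IsIso M₃ := by
        apply IsIso.of_isIso_comp_right M₃ (inv g ≫ G')
      haveI hswapiso := isIso_swap (A i₀) B (⨁ fun i :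
        {i : {i : ι // i ≠ j'.1} // i ≠ ⟨i₀, hij⟩} => A i.1.1)
      haveI hM₂iso : IsIso M₂ := by
        have h12 : IsIso (biprod.desc (biprod.inl ≫ biprod.inr)
            (biprod.desc biprod.inl (biprod.inr ≫ biprod.inr)) ≫ M₂) := by
          rw [hswap]; infer_instance
        exact IsIso.of_isIso_comp_left (biprod.desc (biprod.inl ≫ biprod.inr)
          (biprod.desc biprod.inl (biprod.inr ≫ biprod.inr))) M₂
      haveI : IsIso (biprod.map (𝟙 B) S.hom) := (biprod.mapIso (Iso.refl B) S).isIso_hom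
      have h13 : IsIso (biprod.map (𝟙 B) S.hom ≫
          biprod.desc uB (biproduct.desc (fun i : {i : ι // i ≠ j'.1} => a i.1))) := by
        rw [hMM₂]; infer_instance
      exact IsIso.of_isIso_comp_left (biprod.map (𝟙 B) S.hom)
        (biprod.desc uB (biproduct.desc (fun i : {i : ι // i ≠ j'.1} => a i.1)))

/-- Let `X = A₁ ⊕ ⋯ ⊕ Aₙ = B ⊕ C` in an idempotent complete additive category, with `B`
indecomposable and each `End (A i)` local. Then there is `j` such that
`X = B ⊕ (⊕_{i ≠ j} A i)` via the given canonical morphisms; in particular `B ≅ A j`. -/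
theorem stmt_11 {C : Type*} [Category C] [Preadditive C] [HasFiniteBiproducts C]
    [HasBinaryBiproducts C] [IsIdempotentComplete C]
    (X B Co : C) (n : ℕ) (A : Fin n → C) (a : ∀ i, A i ⟶ X) (uB : B ⟶ X) (uC : Co ⟶ X)
    (hA : IsIso (biproduct.desc a)) (hBC : IsIso (biprod.desc uB uC))
    (hB : IndecomposableObj B) (hloc : ∀ i, IsLocalRing (End (A i))) :
    ∃ j : Fin n,
      IsIso (biprod.desc uB (biproduct.desc (fun i : {i : Fin n // i ≠ j} => a i.1))) ∧
      Nonempty (B ≅ A j) := by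
  exact key n (Fintype.card_fin n) X B Co A a uB uC hA hBC hB hloc
end

section
/- Let C be an idempotent complete additive category (with arbitrary direct sums) with enough compact objects. For any object B, any direct decomposition X = ⊕_{i∈I} A_i, and any split monomorphism u : B → X with B ≠ 0, there exists a finite subset J ⊆ I such that the induced morphism (u, u_J) : B ⊕ X(J) → X is not a split monomorphism, where X(J) = ⊕_{j∈J} A_j and u_J is the canonical inclusion. -/
open CategoryTheory CategoryTheory.Limits

universe w v u

variable {C : Type u} [Category.{v} C] [Preadditive C] [HasBinaryBiproducts C]
  [HasCoproducts.{w} C]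

/-- An object `K` is compact if every morphism from `K` into a direct sum factors through
the inclusion of a finite subsum. -/
def IsCompactObj (K : C) : Prop :=
  ∀ {ι : Type w} (A : ι → C) (f : K ⟶ ∐ A),
    ∃ (J : Finset ι) (g : K ⟶ ∐ (fun j : J => A j.1)),
      f = g ≫ Sigma.desc (fun j : J => Sigma.ι A j.1)

/-- `C` has enough compact objects: every nonzero object receives a nonzero morphism from
some compact object. -/
def EnoughCompacts : Prop :=
  ∀ B : C, ¬ IsZero B → ∃ (K : C) (f : K ⟶ B), IsCompactObj K ∧ f ≠ 0

/-- In an idempotent complete additive category with direct sums and enough compact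
objects, for every nonzero `B`, every decomposition `X = ⊕_{i ∈ I} A i`, and every split
monomorphism `u : B ⟶ X`, there is a finite `J ⊆ I` such that
`(u, u_J) : B ⊕ X(J) ⟶ X` is not a split monomorphism. -/
theorem stmt_12 [IsIdempotentComplete C] (hC : EnoughCompacts (C := C))
    (B : C) {ι : Type w} (A : ι → C) (u : B ⟶ ∐ A) (hu : IsSplitMono u)
    (hB : ¬ IsZero B) :
    ∃ J : Finset ι,
      ¬ IsSplitMono (biprod.desc u (Sigma.desc (fun j : J => Sigma.ι A j.1))) := by
  obtain ⟨K, f, hK, hf⟩ := hC B hB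
  obtain ⟨J, g, hfu⟩ := hK A (f ≫ u)
  refine ⟨J, fun h => hf ?_⟩
  haveI := h
  set m := biprod.desc u (Sigma.desc (fun j : J => Sigma.ι A j.1)) with hm
  have h1 : u ≫ retraction m ≫ biprod.fst = 𝟙 B := by
    have : u = biprod.inl ≫ m := by simp [hm]
    rw [this, Category.assoc, ← Category.assoc m, IsSplitMono.id]
    simp
  have h2 : Sigma.desc (fun j : J => Sigma.ι A j.1) ≫ retraction m ≫ biprod.fst
      = (0 : _ ⟶ B) := by
    have : Sigma.desc (fun j : J => Sigma.ι A j.1) = biprod.inr ≫ m := by simp [hm]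
    rw [this, Category.assoc, ← Category.assoc m, IsSplitMono.id]
    simp
  calc f = (f ≫ u) ≫ retraction m ≫ biprod.fst := by
          rw [Category.assoc, h1, Category.comp_id]
    _ = g ≫ Sigma.desc (fun j : J => Sigma.ι A j.1) ≫ retraction m ≫ biprod.fst := by
          rw [hfu, Category.assoc]
    _ = 0 := by rw [h2, comp_zero]
end

section
/- Let X = M ⊕ N = K ⊕ L be two direct decompositions of an object X in an additive category, with canonical inclusions u_M : M → X and u_K : K → X, such that M is indecomposable with local endomorphism ring and (u_M, u_K) : M ⊕ K → X is not a split monomorphism. Then (u_M, u_L) : M ⊕ L → X is a split monomorphism. -/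
open CategoryTheory CategoryTheory.Limits

lemma aux_split {C : Type*} [Category C] [Preadditive C] [HasBinaryBiproducts C]
    {X M K L : C} (uM : M ⟶ X) (uK : K ⟶ X) (uL : L ⟶ X)
    (hKL : IsIso (biprod.desc uK uL)) (ρ : K ⟶ M)
    (hρ : uM ≫ (inv (biprod.desc uK uL) ≫ biprod.fst) ≫ ρ = 𝟙 M) :
    IsSplitMono (biprod.desc uM uL) := by
  let πK : X ⟶ K := inv (biprod.desc uK uL) ≫ biprod.fst
  let πL : X ⟶ L := inv (biprod.desc uK uL) ≫ biprod.snd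
  have hLinv : uL ≫ inv (biprod.desc uK uL) = biprod.inr := by
    rw [IsIso.comp_inv_eq]
    exact (biprod.inr_desc uK uL).symm
  have hLK : uL ≫ πK = 0 := by
    show uL ≫ inv (biprod.desc uK uL) ≫ biprod.fst = 0
    rw [← Category.assoc, hLinv, biprod.inr_fst]
  have hLL : uL ≫ πL = 𝟙 L := by
    show uL ≫ inv (biprod.desc uK uL) ≫ biprod.snd = 𝟙 L
    rw [← Category.assoc, hLinv, biprod.inr_snd]
  have hMK : uM ≫ πK ≫ ρ = 𝟙 M := hρ
  refine ⟨⟨biprod.lift (πK ≫ ρ) (πL - πK ≫ ρ ≫ uM ≫ πL), ?_⟩⟩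
  apply biprod.hom_ext'
  · rw [biprod.inl_desc_assoc, Category.comp_id]
    apply biprod.hom_ext
    · rw [Category.assoc, biprod.lift_fst, biprod.inl_fst, hMK]
    · rw [Category.assoc, biprod.lift_snd, biprod.inl_snd, Preadditive.comp_sub]
      rw [show uM ≫ πK ≫ ρ ≫ uM ≫ πL = (uM ≫ πK ≫ ρ) ≫ uM ≫ πL by
        simp only [Category.assoc], hMK, Category.id_comp, sub_self]
  · rw [biprod.inr_desc_assoc, Category.comp_id]
    apply biprod.hom_ext
    · rw [Category.assoc, biprod.lift_fst, biprod.inr_fst, ← Category.assoc, hLK,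
        zero_comp]
    · rw [Category.assoc, biprod.lift_snd, biprod.inr_snd, Preadditive.comp_sub, hLL,
        show uL ≫ πK ≫ ρ ≫ uM ≫ πL = (uL ≫ πK) ≫ ρ ≫ uM ≫ πL by
          simp only [Category.assoc], hLK, zero_comp, sub_zero]


/-- Let `X = M ⊕ N = K ⊕ L` be two direct decompositions of `X` in an idempotent complete
additive category, with `M` indecomposable with local endomorphism ring. If
`(u_M, u_K) : M ⊕ K ⟶ X` is not a split monomorphism, then `(u_M, u_L) : M ⊕ L ⟶ X` is a
split monomorphism. -/
theorem stmt_13 {C : Type*} [Category C] [Preadditive C] [HasBinaryBiproducts C]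
    [IsIdempotentComplete C] (X M N K L : C)
    (uM : M ⟶ X) (uN : N ⟶ X) (uK : K ⟶ X) (uL : L ⟶ X)
    (hMN : IsIso (biprod.desc uM uN)) (hKL : IsIso (biprod.desc uK uL))
    (hM : IndecomposableObj M) (hloc : IsLocalRing (End M))
    (h : ¬ IsSplitMono (biprod.desc uM uK)) :
    IsSplitMono (biprod.desc uM uL) := by
  -- retraction of uM coming from the M ⊕ N decomposition
  let rM : X ⟶ M := inv (biprod.desc uM uN) ≫ biprod.fst
  have hrM : uM ≫ rM = 𝟙 M := by
    show uM ≫ inv (biprod.desc uM uN) ≫ biprod.fst = 𝟙 M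
    rw [← Category.assoc]
    have : uM ≫ inv (biprod.desc uM uN) = biprod.inl := by
      rw [IsIso.comp_inv_eq]; exact (biprod.inl_desc uM uN).symm
    rw [this, biprod.inl_fst]
  -- projections of the K ⊕ L decomposition
  let πK : X ⟶ K := inv (biprod.desc uK uL) ≫ biprod.fst
  let πL : X ⟶ L := inv (biprod.desc uK uL) ≫ biprod.snd
  have hid : πK ≫ uK + πL ≫ uL = 𝟙 X := by
    show (inv (biprod.desc uK uL) ≫ biprod.fst) ≫ uK +
      (inv (biprod.desc uK uL) ≫ biprod.snd) ≫ uL = 𝟙 X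
    rw [Category.assoc, Category.assoc, ← Preadditive.comp_add]
    have : biprod.fst ≫ uK + biprod.snd ≫ uL = biprod.desc uK uL := by
      apply biprod.hom_ext' <;> simp
    rw [this, IsIso.inv_hom_id]
  have hsum : (uM ≫ πK ≫ uK ≫ rM) + (uM ≫ πL ≫ uL ≫ rM) = 𝟙 M := by
    have h1 : uM ≫ (πK ≫ uK + πL ≫ uL) ≫ rM = 𝟙 M := by
      rw [hid, Category.id_comp, hrM]
    rw [← h1]
    simp only [Preadditive.add_comp, Preadditive.comp_add, Category.assoc]
  -- locality: one of the two summands is a unit of End M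
  let a : End M := uM ≫ πK ≫ uK ≫ rM
  let b : End M := uM ≫ πL ≫ uL ≫ rM
  have hsum' : a + b = 1 := hsum
  have hcase : IsUnit a ∨ IsUnit b :=
    IsLocalRing.isUnit_or_isUnit_of_add_one hsum'
  rcases hcase with hu | hu
  · -- the component through K is a unit: (uM, uL) is a split mono
    obtain ⟨u, hu⟩ := hu
    apply aux_split uM uK uL hKL ((uK ≫ rM) ≫ u.inv)
    have key : (uM ≫ πK ≫ uK ≫ rM) ≫ u.inv = 𝟙 M := by
      have h2 : (u : End M) ≫ u.inv = 𝟙 M := u.inv_val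
      rw [show (uM ≫ πK ≫ uK ≫ rM : M ⟶ M) = (u : End M) from hu.symm, h2]
    show uM ≫ πK ≫ (uK ≫ rM) ≫ u.inv = 𝟙 M
    calc uM ≫ πK ≫ (uK ≫ rM) ≫ u.inv
        = (uM ≫ πK ≫ uK ≫ rM) ≫ u.inv := by simp only [Category.assoc]
      _ = 𝟙 M := key
  · -- the component through L is a unit: (uM, uK) would be a split mono, contradiction
    exfalso
    apply h
    obtain ⟨u, hu⟩ := hu
    have hLK : IsIso (biprod.desc uL uK) := by
      have hb : biprod.desc uL uK = (biprod.braiding L K).hom ≫ biprod.desc uK uL := by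
        apply biprod.hom_ext' <;> simp
      rw [hb]; infer_instance
    apply aux_split uM uL uK hLK ((uL ≫ rM) ≫ u.inv)
    have hLinv : uL ≫ inv (biprod.desc uK uL) = biprod.inr := by
      rw [IsIso.comp_inv_eq]; exact (biprod.inr_desc uK uL).symm
    have hKinv : uK ≫ inv (biprod.desc uK uL) = biprod.inl := by
      rw [IsIso.comp_inv_eq]; exact (biprod.inl_desc uK uL).symm
    have hfst : inv (biprod.desc uL uK) ≫ biprod.fst = πL := by
      rw [IsIso.inv_comp_eq]
      show biprod.fst = biprod.desc uL uK ≫ inv (biprod.desc uK uL) ≫ biprod.snd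
      apply biprod.hom_ext'
      · rw [biprod.inl_fst, biprod.inl_desc_assoc, ← Category.assoc, hLinv, biprod.inr_snd]
      · rw [biprod.inr_fst, biprod.inr_desc_assoc, ← Category.assoc, hKinv, biprod.inl_snd]
    rw [hfst]
    have key : (uM ≫ πL ≫ uL ≫ rM) ≫ u.inv = 𝟙 M := by
      have h2 : (u : End M) ≫ u.inv = 𝟙 M := u.inv_val
      rw [show (uM ≫ πL ≫ uL ≫ rM : M ⟶ M) = (u : End M) from hu.symm, h2]
    calc uM ≫ πL ≫ (uL ≫ rM) ≫ u.inv
        = (uM ≫ πL ≫ uL ≫ rM) ≫ u.inv := by simp only [Category.assoc]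
      _ = 𝟙 M := key
end

section
/- The group of p-adic integers Ẑ_p, embedded diagonally as {(a_n + p^nℤ)_n : a_{n+1} ≡ a_n mod p^n}, is a pure subgroup of the direct product ∏_{n>0} ℤ/p^nℤ; consequently, since Ẑ_p is pure-injective, the inclusion Ẑ_p → ∏_{n>0} ℤ/p^nℤ splits, i.e., there exists a group homomorphism u : ∏_{n>0} ℤ/p^nℤ → Ẑ_p restricting to the identity on Ẑ_p. -/
open Padic

variable (p : ℕ) [Fact p.Prime]

/-- The diagonal embedding of the `p`-adic integers into `∏_{n > 0} ℤ/pⁿℤ`, sending `x`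
to its family of residues mod `p^(n+1)`. -/
noncomputable def padicDiag : ℤ_[p] →+ ∀ n : ℕ, ZMod (p ^ (n + 1)) :=
  AddMonoidHom.mk' (fun x n => PadicInt.toZModPow (n + 1) x)
    (fun a b => by funext n; exact map_add _ a b)

namespace Stmt16Aux

open Filter Topology

/-- A fixed ultrafilter on `ℕ` extending `atTop`. -/
noncomputable def U : Ultrafilter ℕ := (Ultrafilter.exists_le (atTop : Filter ℕ)).choose

lemma U_le : (U : Filter ℕ) ≤ atTop := (Ultrafilter.exists_le (atTop : Filter ℕ)).choose_spec

variable {p}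

/-- The (non-additive) lift `ZMod (p^(n+1)) → ℤ_[p]` via `val`. -/
noncomputable def iot (n : ℕ) (a : ZMod (p ^ (n + 1))) : ℤ_[p] := (a.val : ℤ_[p])

lemma toZModPow_iot (n : ℕ) (a : ZMod (p ^ (n + 1))) :
    PadicInt.toZModPow (n + 1) (iot n a) = a := by
  haveI : NeZero (p ^ (n + 1)) :=
    ⟨pow_ne_zero _ (Fact.out (p := p.Prime)).ne_zero⟩
  rw [iot, map_natCast, ZMod.natCast_zmod_val]

lemma norm_sub_le_of_toZModPow_eq {n : ℕ} {a b : ℤ_[p]}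
    (h : PadicInt.toZModPow (n + 1) a = PadicInt.toZModPow (n + 1) b) :
    ‖a - b‖ ≤ (p : ℝ) ^ (-((n : ℤ) + 1)) := by
  have hmem : a - b ∈ RingHom.ker (PadicInt.toZModPow (p := p) (n + 1)) := by
    simp [RingHom.mem_ker, map_sub, h]
  rw [PadicInt.ker_toZModPow] at hmem
  have := (PadicInt.norm_le_pow_iff_mem_span_pow (a - b) (n + 1)).mpr hmem
  simpa using this

lemma tendsto_zero_of_bound (g : ℕ → ℤ_[p])
    (h : ∀ n, ‖g n‖ ≤ (p : ℝ) ^ (-((n : ℤ) + 1))) :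
    Tendsto g atTop (𝓝 0) := by
  have hp1 : (1 : ℝ) < p := by exact_mod_cast (Fact.out (p := p.Prime)).one_lt
  have h0 : (0 : ℝ) ≤ (p : ℝ)⁻¹ := by positivity
  have h1 : (p : ℝ)⁻¹ < 1 := inv_lt_one_of_one_lt₀ hp1
  have hb : Tendsto (fun n : ℕ => ((p : ℝ)⁻¹) ^ (n + 1)) atTop (𝓝 0) :=
    (tendsto_pow_atTop_nhds_zero_of_lt_one h0 h1).comp (tendsto_add_atTop_nat 1)
  apply squeeze_zero_norm _ hb
  intro n
  calc ‖g n‖ ≤ (p : ℝ) ^ (-((n : ℤ) + 1)) := h n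
    _ = ((p : ℝ)⁻¹) ^ (n + 1) := by
        rw [show (-((n : ℤ) + 1)) = -((n + 1 : ℕ) : ℤ) by push_cast; ring,
          zpow_neg, zpow_natCast, inv_pow]

/-- Limit of a sequence in `ℤ_[p]` along the ultrafilter `U` (exists by compactness). -/
noncomputable def ulim (f : ℕ → ℤ_[p]) : ℤ_[p] :=
  (IsCompact.ultrafilter_le_nhds isCompact_univ (Ultrafilter.map f U)
    (by simp)).choose

lemma ulim_spec (f : ℕ → ℤ_[p]) : Tendsto f (U : Filter ℕ) (𝓝 (ulim f)) := by
  have := (IsCompact.ultrafilter_le_nhds isCompact_univ (Ultrafilter.map f U)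
    (by simp)).choose_spec.2
  exact this

lemma ulim_eq {f : ℕ → ℤ_[p]} {a : ℤ_[p]} (h : Tendsto f (U : Filter ℕ) (𝓝 a)) :
    ulim f = a :=
  tendsto_nhds_unique (ulim_spec f) h

set_option maxHeartbeats 1000000 in
/-- The retraction `∏ ℤ/p^{n+1}ℤ →+ ℤ_[p]`. -/
noncomputable def uhom : (∀ n : ℕ, ZMod (p ^ (n + 1))) →+ ℤ_[p] :=
  AddMonoidHom.mk' (fun y => ulim (fun n => iot n (y n))) (by
    intro y z
    refine ulim_eq ?_
    have h1 : Tendsto (fun n => iot n (y n) + iot n (z n)) (U : Filter ℕ)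
        (𝓝 (ulim (fun n => iot n (y n)) + ulim (fun n => iot n (z n)))) :=
      (ulim_spec _).add (ulim_spec _)
    have hd : Tendsto (fun n => iot n (y n + z n) - (iot n (y n) + iot n (z n)))
        atTop (𝓝 0) := by
      apply tendsto_zero_of_bound
      intro n
      apply norm_sub_le_of_toZModPow_eq
      simp [toZModPow_iot, map_add]
    have h2 := h1.add (hd.mono_left U_le)
    have h3 : Tendsto (fun n => iot n (y n + z n)) (U : Filter ℕ)
        (𝓝 (ulim (fun n => iot n (y n)) + ulim (fun n => iot n (z n)))) := by
      simpa using h2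
    exact h3)

lemma uhom_apply (y : ∀ n : ℕ, ZMod (p ^ (n + 1))) :
    uhom y = ulim (fun n => iot n (y n)) := rfl

end Stmt16Aux

open Stmt16Aux Filter Topology in
/-- `ℤ_[p]`, embedded diagonally, is a pure subgroup of `∏_{n > 0} ℤ/pⁿℤ` (every element of
the image divisible by `k` in the product is divisible by `k` in the image), and since
`ℤ_[p]` is pure-injective the inclusion splits: there is a homomorphism
`u : ∏_{n > 0} ℤ/pⁿℤ →+ ℤ_[p]` restricting to the identity on `ℤ_[p]`. -/
theorem stmt_16 :
    (∀ (k : ℤ) (x : ℤ_[p]) (y : ∀ n : ℕ, ZMod (p ^ (n + 1))),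
      padicDiag p x = k • y → ∃ z : ℤ_[p], x = k • z) ∧
    ∃ u : (∀ n : ℕ, ZMod (p ^ (n + 1))) →+ ℤ_[p], ∀ x : ℤ_[p], u (padicDiag p x) = x := by
  constructor
  · intro k x y h
    -- the sequence `k * iot n (y n)` tends to `x`
    have key : ∀ n : ℕ, PadicInt.toZModPow (n + 1) x
        = PadicInt.toZModPow (n + 1) ((k : ℤ_[p]) * iot n (y n)) := by
      intro n
      have hn : PadicInt.toZModPow (n + 1) x = k • y n := congrFun h n
      rw [hn, map_mul, toZModPow_iot, map_intCast, zsmul_eq_mul]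
    have hd : Tendsto (fun n => x - (k : ℤ_[p]) * iot n (y n)) atTop (𝓝 0) :=
      tendsto_zero_of_bound _ fun n => norm_sub_le_of_toZModPow_eq (key n)
    have htend : Tendsto (fun n => (k : ℤ_[p]) * iot n (y n)) atTop (𝓝 x) := by
      have := (tendsto_const_nhds (x := x) (f := atTop)).sub hd
      simpa using this
    have hS : IsClosed (Set.range (fun z : ℤ_[p] => (k : ℤ_[p]) * z)) :=
      (isCompact_range (continuous_const.mul continuous_id)).isClosed
    have hx : x ∈ Set.range (fun z : ℤ_[p] => (k : ℤ_[p]) * z) :=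
      hS.mem_of_tendsto htend (Eventually.of_forall fun n => ⟨iot n (y n), rfl⟩)
    obtain ⟨z, hz⟩ := hx
    exact ⟨z, by rw [zsmul_eq_mul]; exact hz.symm⟩
  · -- the splitting via ultrafilter limits
    refine ⟨uhom, ?_⟩
    intro x
    rw [uhom_apply]
    refine ulim_eq ?_
    have key : ∀ n : ℕ, PadicInt.toZModPow (n + 1) (iot n (padicDiag p x n))
        = PadicInt.toZModPow (n + 1) x := by
      intro n
      rw [toZModPow_iot]; rfl
    have hd : Tendsto (fun n => iot n (padicDiag p x n) - x) atTop (𝓝 0) :=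
      tendsto_zero_of_bound _ fun n => norm_sub_le_of_toZModPow_eq (key n)
    have h2 := hd.add (tendsto_const_nhds (x := x) (f := atTop))
    simp only [sub_add_cancel, zero_add] at h2
    exact h2.mono_left U_le
end

section
/- There is a short exact sequence of abelian groups 0 → Ẑ_p → ∏_{n>0} ℤ/p^nℤ → ∏_{n>0} ℤ/p^nℤ → 0, where the first map is the diagonal embedding of the p-adic integers and the second sends (a_n + p^nℤ)_n to (a_{n+1} - a_n + p^nℤ)_n; moreover this sequence splits, so Ẑ_p × ∏_{n>0} ℤ/p^nℤ ≅ ∏_{n>0} ℤ/p^nℤ. -/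
open Filter

section UlimAux

/-- Limit of a function to a finite type along an ultrafilter. -/
noncomputable def ulim {β : Type*} [Finite β] (U : Ultrafilter ℕ) (f : ℕ → β) : β :=
  (Ultrafilter.eq_pure_of_finite (U.map f)).choose

theorem ulim_spec {β : Type*} [Finite β] (U : Ultrafilter ℕ) (f : ℕ → β) :
    ∀ᶠ j in (U : Filter ℕ), f j = ulim U f := by
  have h := (Ultrafilter.eq_pure_of_finite (U.map f)).choose_spec
  have : {ulim U f} ∈ U.map f := by rw [h]; exact Filter.mem_pure.2 rfl
  exact this

theorem ulim_unique {β : Type*} [Finite β] (U : Ultrafilter ℕ) (f : ℕ → β) {b : β}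
    (h : ∀ᶠ j in (U : Filter ℕ), f j = b) : ulim U f = b := by
  obtain ⟨j, h1, h2⟩ := ((ulim_spec U f).and h).exists
  rw [← h1, h2]

end UlimAux

variable (p : ℕ) [Fact p.Prime]

instance : NeZero p := ⟨(Fact.out : p.Prime).ne_zero⟩

/-- The subring of compatible sequences in `∏ k, ZMod (p^k)`. -/
def padicCompatSubring : Subring (∀ k : ℕ, ZMod (p ^ k)) where
  carrier := {b | ∀ k, ZMod.castHom (pow_dvd_pow p (Nat.le_succ k)) (ZMod (p ^ k)) (b (k + 1))
    = b k}
  zero_mem' := fun k => by simp only [Pi.zero_apply, map_zero]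
  one_mem' := fun k => by simp only [Pi.one_apply, map_one]
  add_mem' := fun {a b} ha hb k => by
    simp only [Pi.add_apply, map_add, ha k, hb k]
  mul_mem' := fun {a b} ha hb k => by
    simp only [Pi.mul_apply, map_mul, ha k, hb k]
  neg_mem' := fun {a} ha k => by
    simp only [Pi.neg_apply, map_neg, ha k]

omit [Fact p.Prime] in
theorem padicCompat_cast_down {b : ∀ k : ℕ, ZMod (p ^ k)}
    (hb : ∀ k, ZMod.castHom (pow_dvd_pow p (Nat.le_succ k)) (ZMod (p ^ k)) (b (k + 1)) = b k)
    {k1 k2 : ℕ} (h : k1 ≤ k2) :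
    ZMod.castHom (pow_dvd_pow p h) (ZMod (p ^ k1)) (b k2) = b k1 := by
  induction k2, h using Nat.le_induction with
  | base => simp [ZMod.castHom_apply, ZMod.cast_id]
  | succ n hn ih =>
      have : (ZMod.castHom (pow_dvd_pow p (le_trans hn (Nat.le_succ n))) (ZMod (p ^ k1)))
          (b (n + 1)) =
          (ZMod.castHom (pow_dvd_pow p hn) (ZMod (p ^ k1)))
            ((ZMod.castHom (pow_dvd_pow p (Nat.le_succ n)) (ZMod (p ^ n))) (b (n + 1))) := by
        rw [← RingHom.comp_apply, ZMod.castHom_comp]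
      rw [this, hb n, ih]

/-- A compatible sequence of residues comes from a `p`-adic integer. -/
theorem padic_exists_of_compat (b : ∀ k : ℕ, ZMod (p ^ k))
    (hb : ∀ k, ZMod.castHom (pow_dvd_pow p (Nat.le_succ k)) (ZMod (p ^ k)) (b (k + 1)) = b k) :
    ∃ x : ℤ_[p], ∀ k, PadicInt.toZModPow k x = b k := by
  set R := padicCompatSubring p
  set f : ∀ k : ℕ, R →+* ZMod (p ^ k) := fun k => (Pi.evalRingHom _ k).comp R.subtype with hf
  have f_compat : ∀ (k1 k2) (hk : k1 ≤ k2),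
      (ZMod.castHom (pow_dvd_pow p hk) (ZMod (p ^ k1))).comp (f k2) = f k1 := by
    intro k1 k2 hk
    ext x
    exact padicCompat_cast_down p x.2 hk
  refine ⟨PadicInt.lift f_compat ⟨b, hb⟩, fun k => ?_⟩
  exact (RingHom.congr_fun (PadicInt.lift_spec f_compat k) ⟨b, hb⟩ : _)

/-- The homomorphism `∏_{n > 0} ℤ/pⁿℤ → ∏_{n > 0} ℤ/pⁿℤ` sending `(aₙ)ₙ` to
`(a_{n+1} - aₙ)ₙ` (where `a_{n+1}` is reduced mod `pⁿ`). -/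
noncomputable def padicPi : (∀ n : ℕ, ZMod (p ^ (n + 1))) →+ ∀ n : ℕ, ZMod (p ^ (n + 1)) :=
  AddMonoidHom.mk'
    (fun a n => ZMod.castHom (pow_dvd_pow p (Nat.le_succ (n + 1))) (ZMod (p ^ (n + 1)))
        (a (n + 1)) - a n)
    (fun a b => by funext n; simp [map_add]; ring)

section Retraction

variable (U : Ultrafilter ℕ)

/-- The `k`-th ultrafilter-limit coordinate of a sequence in `∏_{n>0} ℤ/pⁿℤ`. -/
noncomputable def padicW (k : ℕ) (a : ∀ n : ℕ, ZMod (p ^ (n + 1))) : ZMod (p ^ k) :=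
  ulim U fun j => ZMod.cast (a j)

omit [Fact p.Prime] in
theorem eventually_ge (hU : (U : Filter ℕ) ≤ cofinite) (k : ℕ) :
    ∀ᶠ j in (U : Filter ℕ), k ≤ j := by
  have : {j : ℕ | k ≤ j} ∈ (cofinite : Filter ℕ) := by
    rw [Nat.cofinite_eq_atTop]
    exact Filter.eventually_atTop.2 ⟨k, fun j hj => hj⟩
  exact hU this

theorem padicW_add (hU : (U : Filter ℕ) ≤ cofinite) (k : ℕ)
    (a b : ∀ n : ℕ, ZMod (p ^ (n + 1))) :
    padicW p U k (a + b) = padicW p U k a + padicW p U k b := by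
  apply ulim_unique
  filter_upwards [eventually_ge U hU k, ulim_spec U fun j => (ZMod.cast (a j) : ZMod (p ^ k)),
    ulim_spec U fun j => (ZMod.cast (b j) : ZMod (p ^ k))] with j hj ha hb
  have hj' : k ≤ j := hj
  simp only [padicW]
  rw [← ha, ← hb]
  show ZMod.castHom (pow_dvd_pow p (hj'.trans (Nat.le_succ j))) (ZMod (p ^ k)) ((a + b) j)
    = ZMod.castHom (pow_dvd_pow p (hj'.trans (Nat.le_succ j))) (ZMod (p ^ k)) (a j)
      + ZMod.castHom (pow_dvd_pow p (hj'.trans (Nat.le_succ j))) (ZMod (p ^ k)) (b j)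
  rw [Pi.add_apply, map_add]

theorem padicW_compat (hU : (U : Filter ℕ) ≤ cofinite) (k : ℕ)
    (a : ∀ n : ℕ, ZMod (p ^ (n + 1))) :
    ZMod.castHom (pow_dvd_pow p (Nat.le_succ k)) (ZMod (p ^ k)) (padicW p U (k + 1) a)
      = padicW p U k a := by
  symm
  apply ulim_unique
  filter_upwards [eventually_ge U hU (k + 1),
    ulim_spec U fun j => (ZMod.cast (a j) : ZMod (p ^ (k + 1)))] with j hj ha
  have hj' : k + 1 ≤ j := hj
  simp only [padicW]
  rw [← ha]
  show ZMod.castHom (pow_dvd_pow p ((Nat.le_succ k).trans (hj'.trans (Nat.le_succ j))))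
      (ZMod (p ^ k)) (a j)
    = ZMod.castHom (pow_dvd_pow p (Nat.le_succ k)) (ZMod (p ^ k))
        (ZMod.castHom (pow_dvd_pow p (hj'.trans (Nat.le_succ j))) (ZMod (p ^ (k + 1)))
          (a j))
  rw [← RingHom.comp_apply, ZMod.castHom_comp]

theorem padicW_diag (hU : (U : Filter ℕ) ≤ cofinite) (k : ℕ) (x : ℤ_[p]) :
    padicW p U k (padicDiag p x) = PadicInt.toZModPow k x := by
  apply ulim_unique
  filter_upwards [eventually_ge U hU k] with j hj
  have hj' : k ≤ j := hj
  show (ZMod.cast (PadicInt.toZModPow (j + 1) x) : ZMod (p ^ k)) = _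
  exact PadicInt.cast_toZModPow k (j + 1) (hj'.trans (Nat.le_succ j)) x

end Retraction

/-- There is a short exact sequence `0 → ℤ_[p] → ∏_{n>0} ℤ/pⁿℤ → ∏_{n>0} ℤ/pⁿℤ → 0`, where
the first map is the diagonal embedding and the second sends `(aₙ)ₙ` to `(a_{n+1} - aₙ)ₙ`;
moreover this sequence splits, so `ℤ_[p] × ∏_{n>0} ℤ/pⁿℤ ≅ ∏_{n>0} ℤ/pⁿℤ`. -/
theorem stmt_17 :
    Function.Injective (padicDiag p) ∧ Function.Surjective (padicPi p) ∧
    (padicDiag p).range = (padicPi p).ker ∧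
    (∃ u : (∀ n : ℕ, ZMod (p ^ (n + 1))) →+ ℤ_[p], ∀ x : ℤ_[p], u (padicDiag p x) = x) ∧
    Nonempty ((ℤ_[p] × ∀ n : ℕ, ZMod (p ^ (n + 1))) ≃+ ∀ n : ℕ, ZMod (p ^ (n + 1))) := by

  classical
  have hdiag : ∀ (x : ℤ_[p]) (n : ℕ), padicDiag p x n = PadicInt.toZModPow (n + 1) x :=
    fun _ _ => rfl
  have hpi : ∀ (a : ∀ n : ℕ, ZMod (p ^ (n + 1))) (n : ℕ),
      padicPi p a n = ZMod.castHom (pow_dvd_pow p (Nat.le_succ (n + 1))) (ZMod (p ^ (n + 1)))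
        (a (n + 1)) - a n := fun _ _ => rfl
  -- injectivity
  have hinj : Function.Injective (padicDiag p) := by
    intro x y h
    rw [← PadicInt.ext_of_toZModPow]
    intro n
    cases n with
    | zero =>
        rw [← PadicInt.cast_toZModPow 0 1 (Nat.zero_le 1) x,
          ← PadicInt.cast_toZModPow 0 1 (Nat.zero_le 1) y]
        have := congrFun h 0
        rw [hdiag, hdiag] at this
        rw [this]
    | succ n =>
        have := congrFun h n
        rwa [hdiag, hdiag] at this
  -- range ⊆ ker (pointwise)
  have hrk : ∀ x : ℤ_[p], padicPi p (padicDiag p x) = 0 := by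
    intro x
    funext n
    rw [hpi, hdiag, hdiag, ZMod.castHom_apply,
      PadicInt.cast_toZModPow (n + 1) (n + 2) (Nat.le_succ _) x, sub_self, Pi.zero_apply]
  -- surjectivity
  have hsurj : Function.Surjective (padicPi p) := by
    intro b
    refine ⟨fun n => n.rec (motive := fun n => ZMod (p ^ (n + 1))) 0
      (fun n an => (((b n + an).val : ℕ) : ZMod (p ^ (n + 1 + 1)))), ?_⟩
    funext n
    rw [hpi]
    haveI : NeZero (p ^ (n + 1)) := ⟨pow_ne_zero _ (NeZero.ne p)⟩
    show ZMod.castHom _ (ZMod (p ^ (n + 1))) (((b n + _).val : ℕ) : ZMod (p ^ (n + 1 + 1)))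
      - _ = b n
    rw [map_natCast, ZMod.natCast_rightInverse _]
    ring
  refine ⟨hinj, hsurj, ?_, ?_, ?_⟩
  · -- range = ker
    ext a
    constructor
    · rintro ⟨x, rfl⟩
      exact hrk x
    · intro ha
      have ha' : ∀ n, ZMod.castHom (pow_dvd_pow p (Nat.le_succ (n + 1)))
          (ZMod (p ^ (n + 1))) (a (n + 1)) = a n := by
        intro n
        have := congrFun (ha : padicPi p a = 0) n
        rw [hpi, Pi.zero_apply, sub_eq_zero] at this
        exact this
      set b : ∀ k : ℕ, ZMod (p ^ k) :=
        fun k => Nat.casesOn (motive := fun k => ZMod (p ^ k)) k 0 (fun n => a n) with hbdef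
      have hb : ∀ k, ZMod.castHom (pow_dvd_pow p (Nat.le_succ k)) (ZMod (p ^ k)) (b (k + 1))
          = b k := by
        intro k
        cases k with
        | zero =>
            haveI : Subsingleton (ZMod (p ^ 0)) := by rw [pow_zero]; infer_instance
            exact Subsingleton.elim _ _
        | succ n => exact ha' n
      obtain ⟨x, hx⟩ := padic_exists_of_compat p b hb
      exact ⟨x, by funext n; rw [hdiag]; exact hx (n + 1)⟩
  · -- retraction
    set U : Ultrafilter ℕ := Filter.hyperfilter ℕ with hUdef
    have hU : (U : Filter ℕ) ≤ Filter.cofinite := Filter.hyperfilter_le_cofinite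
    have hex : ∀ a : ∀ n : ℕ, ZMod (p ^ (n + 1)),
        ∃ x : ℤ_[p], ∀ k, PadicInt.toZModPow k x = padicW p U k a :=
      fun a => padic_exists_of_compat p _ (fun k => padicW_compat p U hU k a)
    choose g hg using hex
    have gadd : ∀ a b, g (a + b) = g a + g b := by
      intro a b
      rw [← PadicInt.ext_of_toZModPow]
      intro k
      rw [hg, padicW_add p U hU, map_add, hg, hg]
    refine ⟨AddMonoidHom.mk' g gadd, fun x => ?_⟩
    rw [← PadicInt.ext_of_toZModPow]
    intro k
    show PadicInt.toZModPow k (g (padicDiag p x)) = _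
    rw [hg, padicW_diag p U hU]
  · -- the isomorphism
    set U : Ultrafilter ℕ := Filter.hyperfilter ℕ with hUdef
    have hU : (U : Filter ℕ) ≤ Filter.cofinite := Filter.hyperfilter_le_cofinite
    have hex : ∀ a : ∀ n : ℕ, ZMod (p ^ (n + 1)),
        ∃ x : ℤ_[p], ∀ k, PadicInt.toZModPow k x = padicW p U k a :=
      fun a => padic_exists_of_compat p _ (fun k => padicW_compat p U hU k a)
    choose g hg using hex
    have gadd : ∀ a b, g (a + b) = g a + g b := by
      intro a b
      rw [← PadicInt.ext_of_toZModPow]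
      intro k
      rw [hg, padicW_add p U hU, map_add, hg, hg]
    have gdiag : ∀ x : ℤ_[p], g (padicDiag p x) = x := by
      intro x
      rw [← PadicInt.ext_of_toZModPow]
      intro k
      rw [hg, padicW_diag p U hU]
    set u : (∀ n : ℕ, ZMod (p ^ (n + 1))) →+ ℤ_[p] := AddMonoidHom.mk' g gadd with hudef
    set e : (∀ n : ℕ, ZMod (p ^ (n + 1))) →+ ℤ_[p] × ∀ n : ℕ, ZMod (p ^ (n + 1)) :=
      u.prod (padicPi p) with hedef
    have hbij : Function.Bijective e := by
      constructor
      · intro a b hab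
        have h1 : g a = g b := congrArg Prod.fst hab
        have h2 : padicPi p a = padicPi p b := congrArg Prod.snd hab
        have hker : padicPi p (a - b) = 0 := by rw [map_sub, h2, sub_self]
        -- a - b ∈ ker = range
        have ha' : ∀ n, ZMod.castHom (pow_dvd_pow p (Nat.le_succ (n + 1)))
            (ZMod (p ^ (n + 1))) ((a - b) (n + 1)) = (a - b) n := by
          intro n
          have := congrFun hker n
          rw [hpi, Pi.zero_apply, sub_eq_zero] at this
          exact this
        set c : ∀ k : ℕ, ZMod (p ^ k) :=
          fun k => Nat.casesOn (motive := fun k => ZMod (p ^ k)) k 0 (fun n => (a - b) n)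
        have hc : ∀ k, ZMod.castHom (pow_dvd_pow p (Nat.le_succ k)) (ZMod (p ^ k)) (c (k + 1))
            = c k := by
          intro k
          cases k with
          | zero =>
              haveI : Subsingleton (ZMod (p ^ 0)) := by rw [pow_zero]; infer_instance
              exact Subsingleton.elim _ _
          | succ n => exact ha' n
        obtain ⟨x, hx⟩ := padic_exists_of_compat p c hc
        have hxab : padicDiag p x = a - b := by
          funext n; rw [hdiag]; exact hx (n + 1)
        have hgab : g (a - b) = g a - g b := by
          have h5 := gadd (a - b) b
          rw [sub_add_cancel] at h5
          rw [h5]; ring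
        have hx0 : x = 0 := by rw [← gdiag x, hxab, hgab, h1, sub_self]
        have hab0 : a - b = 0 := by rw [← hxab, hx0, map_zero]
        exact sub_eq_zero.mp hab0
      · rintro ⟨x, m⟩
        obtain ⟨a₀, ha₀⟩ := hsurj m
        refine ⟨a₀ + padicDiag p (x - g a₀), ?_⟩
        have he : e (a₀ + padicDiag p (x - g a₀)) =
            (g a₀ + (x - g a₀), padicPi p a₀ + padicPi p (padicDiag p (x - g a₀))) := by
          show (g (a₀ + padicDiag p _), padicPi p (a₀ + padicDiag p _)) = _
          rw [gadd, gdiag, map_add]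
        rw [he, hrk, add_zero, ha₀]
        have hxx : g a₀ + (x - g a₀) = x := by ring
        rw [hxx]
    exact ⟨(AddEquiv.ofBijective e hbij).symm⟩
end
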